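/- arXiv:2206.11029 — 6 statements merged into one kernel-verified Lean document; each statement's English description precedes it below -/
import Mathlib

section
/- Let G_s be a connected simple graph on n ≥ 2 vertices with adjacency matrix A_s and G_b a connected simple graph on m ≥ 2 vertices with adjacency matrix A_b. Set N = nm, A_c = A_s ⊗ I_m (the colonisation network of the separated-effect submodel) and A_e = I_n ⊗ A_b (its extinction network), and for each index v set M_v = 1 + Σ_u (A_e)_{vu}. Define g : (0,1)^N → ℝ^N by g_v(p) = (A_c p)_v / (1 − (A_e p)_v / M_v). Then g is well defined (the denominator is strictly positive on (0,1)^N), and for every p ∈ (0,1)^N and all indices u, v, the partial derivative ∂g_v/∂p_u(p) is strictly positive if (A_c)_{vu} = 1 or (A_e)_{vu} = 1, and equals zero otherwise. Consequently the matrix J with J_{vu} = 1 iff ∂g_v/∂p_u > 0 on (0,1)^N is the adjacency matrix of the box product G_s □ G_b and is irreducible. -/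
set_option maxHeartbeats 1600000


open Kronecker


private lemma walk_pow_pos {V : Type*} [Fintype V] [DecidableEq V] (G : SimpleGraph V)
    [DecidableRel G.Adj] (u v : V) (w : G.Walk u v) :
    0 < ((G.adjMatrix ℝ ^ w.length) u v) := by
  rw [SimpleGraph.adjMatrix_pow_apply_eq_card_walk]
  have : 0 < Fintype.card {q : G.Walk u v | q.length = w.length} :=
    Fintype.card_pos_iff.2 ⟨⟨w, rfl⟩⟩
  exact_mod_cast this

/-- Irreducibility of the separated-effect submodel: with colonisation matrix
`A_c = A_s ⊗ I_m` and extinction matrix `A_e = I_n ⊗ A_b`, the function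
`g_v(p) = (A_c p)_v / (1 - (A_e p)_v / M_v)` is well defined on the open cube,
its partial derivative `∂g_v/∂p_u` is strictly positive there exactly when
`(A_c)_{vu} = 1` or `(A_e)_{vu} = 1` (and zero otherwise), and the resulting
0-1 matrix `J` is the adjacency matrix of the box product `G_s □ G_b`, hence
irreducible. -/
theorem separatedEffect_irreducible {n m : ℕ} (hn : 2 ≤ n) (hm : 2 ≤ m)
    (Gs : SimpleGraph (Fin n)) (Gb : SimpleGraph (Fin m))
    [DecidableRel Gs.Adj] [DecidableRel Gb.Adj] [DecidableRel (Gs □ Gb).Adj]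
    (hGs : Gs.Connected) (hGb : Gb.Connected)
    (Ac Ae : Matrix (Fin n × Fin m) (Fin n × Fin m) ℝ)
    (hAc : Ac = (Gs.adjMatrix ℝ) ⊗ₖ (1 : Matrix (Fin m) (Fin m) ℝ))
    (hAe : Ae = (1 : Matrix (Fin n) (Fin n) ℝ) ⊗ₖ (Gb.adjMatrix ℝ))
    (M : Fin n × Fin m → ℝ) (hM : ∀ v, M v = 1 + ∑ u, Ae v u)
    (g : (Fin n × Fin m) → ((Fin n × Fin m) → ℝ) → ℝ)
    (hg : ∀ v p, g v p = (Ac.mulVec p) v / (1 - (Ae.mulVec p) v / M v))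
    (J : Matrix (Fin n × Fin m) (Fin n × Fin m) ℝ)
    (hJ1 : ∀ v u, (∀ p : (Fin n × Fin m) → ℝ, (∀ w, p w ∈ Set.Ioo (0:ℝ) 1) →
      0 < fderiv ℝ (g v) p (Pi.single u 1)) → J v u = 1)
    (hJ0 : ∀ v u, ¬ (∀ p : (Fin n × Fin m) → ℝ, (∀ w, p w ∈ Set.Ioo (0:ℝ) 1) →
      0 < fderiv ℝ (g v) p (Pi.single u 1)) → J v u = 0) :
    -- g is well defined on the open cube: the denominator is strictly positive
    (∀ p : (Fin n × Fin m) → ℝ, (∀ w, p w ∈ Set.Ioo (0:ℝ) 1) →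
      ∀ v, 0 < 1 - (Ae.mulVec p) v / M v) ∧
    -- sign of the partial derivatives on the open cube
    (∀ p : (Fin n × Fin m) → ℝ, (∀ w, p w ∈ Set.Ioo (0:ℝ) 1) →
      ∀ v u, DifferentiableAt ℝ (g v) p ∧
        ((Ac v u = 1 ∨ Ae v u = 1) → 0 < fderiv ℝ (g v) p (Pi.single u 1)) ∧
        (¬ (Ac v u = 1 ∨ Ae v u = 1) → fderiv ℝ (g v) p (Pi.single u 1) = 0)) ∧
    -- J is the adjacency matrix of the box product and is irreducible
    J = (Gs □ Gb).adjMatrix ℝ ∧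
    (∀ u v : Fin n × Fin m, ∃ k : ℕ, 1 ≤ k ∧ 0 < (J ^ k) u v) := by
  classical
  -- entry formulas
  have hAc' : ∀ v u : Fin n × Fin m,
      Ac v u = if Gs.Adj v.1 u.1 ∧ v.2 = u.2 then 1 else 0 := by
    intro v u
    rw [hAc, Matrix.kroneckerMap_apply, SimpleGraph.adjMatrix_apply, Matrix.one_apply]
    by_cases h1 : Gs.Adj v.1 u.1 <;> by_cases h2 : v.2 = u.2 <;> simp [h1, h2]
  have hAe' : ∀ v u : Fin n × Fin m,
      Ae v u = if v.1 = u.1 ∧ Gb.Adj v.2 u.2 then 1 else 0 := by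
    intro v u
    rw [hAe, Matrix.kroneckerMap_apply, SimpleGraph.adjMatrix_apply, Matrix.one_apply]
    by_cases h1 : v.1 = u.1 <;> by_cases h2 : Gb.Adj v.2 u.2 <;> simp [h1, h2]
  have hAcnn : ∀ v u : Fin n × Fin m, 0 ≤ Ac v u := by
    intro v u; rw [hAc']; split <;> norm_num
  have hAenn : ∀ v u : Fin n × Fin m, 0 ≤ Ae v u := by
    intro v u; rw [hAe']; split <;> norm_num
  -- positivity of M
  have hMpos : ∀ v, 0 < M v := by
    intro v
    have h : 0 ≤ ∑ u, Ae v u := Finset.sum_nonneg fun u _ => hAenn v u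
    rw [hM]; linarith
  -- every vertex of Gs has a neighbour
  have exNbrS : ∀ a : Fin n, ∃ b, Gs.Adj a b := by
    intro a
    obtain ⟨b, hb⟩ : ∃ b : Fin n, b ≠ a :=
      Fintype.exists_ne_of_one_lt_card (by simpa using by omega) a
    obtain ⟨w⟩ := hGs.preconnected a b
    cases w with
    | nil => exact absurd rfl hb
    | cons h _ => exact ⟨_, h⟩
  -- mulVec as sums
  have hmv : ∀ (B : Matrix (Fin n × Fin m) (Fin n × Fin m) ℝ) (q : (Fin n × Fin m) → ℝ)
      (v : Fin n × Fin m), B.mulVec q v = ∑ w, B v w * q w := by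
    intro B q v; rfl
  -- denominator positivity
  have hden : ∀ p : (Fin n × Fin m) → ℝ, (∀ w, p w ∈ Set.Ioo (0:ℝ) 1) →
      ∀ v, 0 < 1 - (Ae.mulVec p) v / M v := by
    intro p hp v
    have h1 : Ae.mulVec p v ≤ ∑ u, Ae v u := by
      rw [hmv]
      refine Finset.sum_le_sum fun u _ => ?_
      have := (hp u).2.le
      calc Ae v u * p u ≤ Ae v u * 1 := mul_le_mul_of_nonneg_left this (hAenn v u)
        _ = Ae v u := mul_one _
    have h2 : Ae.mulVec p v < M v := by rw [hM]; linarith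
    have h3 : Ae.mulVec p v / M v < 1 := (div_lt_one (hMpos v)).2 h2
    linarith
  -- numerator positivity
  have hnum : ∀ p : (Fin n × Fin m) → ℝ, (∀ w, p w ∈ Set.Ioo (0:ℝ) 1) →
      ∀ v, 0 < (Ac.mulVec p) v := by
    intro p hp v
    obtain ⟨b, hb⟩ := exNbrS v.1
    rw [hmv]
    refine Finset.sum_pos' (fun u _ => mul_nonneg (hAcnn v u) (hp u).1.le)
      ⟨(b, v.2), Finset.mem_univ _, ?_⟩
    have h1 : Ac v (b, v.2) = 1 := by rw [hAc']; simp [hb]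
    rw [h1, one_mul]; exact (hp _).1
  -- the main differentiability and derivative-value lemma
  have main : ∀ p : (Fin n × Fin m) → ℝ, (∀ w, p w ∈ Set.Ioo (0:ℝ) 1) →
      ∀ v u, DifferentiableAt ℝ (g v) p ∧
        fderiv ℝ (g v) p (Pi.single u 1) =
          (Ac v u * (1 - Ae.mulVec p v / M v) + Ac.mulVec p v * (Ae v u / M v)) /
            (1 - Ae.mulVec p v / M v) ^ 2 := by
    intro p hp v u
    have hDpos := hden p hp v
    have hgfun : g v = fun q => (Ac.mulVec q) v / (1 - (Ae.mulVec q) v / M v) :=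
      funext fun q => hg v q
    -- differentiability of numerator and denominator
    have hNd : ∀ (B : Matrix (Fin n × Fin m) (Fin n × Fin m) ℝ)
        (q : (Fin n × Fin m) → ℝ),
        DifferentiableAt ℝ (fun r : (Fin n × Fin m) → ℝ => B.mulVec r v) q := by
      intro B q
      have : (fun r : (Fin n × Fin m) → ℝ => B.mulVec r v) =
          fun r => ∑ w, B v w * r w := by
        funext r; exact hmv B r v
      rw [this]
      exact DifferentiableAt.fun_sum fun w _ =>
        ((ContinuousLinearMap.proj (R := ℝ) (φ := fun _ : Fin n × Fin m => ℝ)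
          w).differentiableAt).const_mul _
    have hDd : DifferentiableAt ℝ
        (fun q : (Fin n × Fin m) → ℝ => 1 - (Ae.mulVec q) v / M v) p := by
      have : (fun q : (Fin n × Fin m) → ℝ => 1 - (Ae.mulVec q) v / M v) =
          fun q => 1 - (Ae.mulVec q) v * (M v)⁻¹ := by
        funext q; rw [div_eq_mul_inv]
      rw [this]
      exact (differentiableAt_const 1).sub ((hNd Ae p).mul_const _)
    have hDne : (1 : ℝ) - (Ae.mulVec p) v / M v ≠ 0 := ne_of_gt hDpos
    have hgd : DifferentiableAt ℝ (g v) p := by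
      rw [hgfun]
      have : (fun q : (Fin n × Fin m) → ℝ =>
          (Ac.mulVec q) v / (1 - (Ae.mulVec q) v / M v)) =
          fun q => (Ac.mulVec q) v * (1 - (Ae.mulVec q) v / M v)⁻¹ := by
        funext q; rw [div_eq_mul_inv]
      rw [this]
      exact (hNd Ac p).mul (hDd.inv hDne)
    refine ⟨hgd, ?_⟩
    -- the 1-D slice
    set e : (Fin n × Fin m) → ℝ := Pi.single u 1 with he
    have hline : HasDerivAt (fun t : ℝ => p + t • e) e 0 := by
      simpa using ((hasDerivAt_id (0:ℝ)).smul_const e).const_add p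
    have hcomp : HasDerivAt (fun t : ℝ => g v (p + t • e))
        (fderiv ℝ (g v) p e) 0 := by
      have h0 : p + (0:ℝ) • e = p := by simp
      have hgp : HasFDerivAt (g v) (fderiv ℝ (g v) p) (p + (0:ℝ) • e) := by
        rw [h0]; exact hgd.hasFDerivAt
      exact hgp.comp_hasDerivAt 0 hline
    -- evaluate the slice explicitly
    have hsum : ∀ (B : Matrix (Fin n × Fin m) (Fin n × Fin m) ℝ) (t : ℝ),
        B.mulVec (p + t • e) v = B.mulVec p v + B v u * t := by
      intro B t
      rw [hmv, hmv]
      have h : ∀ w, (p + t • e) w = p w + t * (if w = u then 1 else 0) := by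
        intro w; simp [he, Pi.single_apply]
      simp only [h, mul_add, Finset.sum_add_distrib, mul_ite, mul_one, mul_zero,
        Finset.sum_ite_eq', Finset.mem_univ, if_true]
    have hslice : (fun t : ℝ => g v (p + t • e)) =
        fun t => (Ac.mulVec p v + Ac v u * t) /
          ((1 - Ae.mulVec p v / M v) - (Ae v u / M v) * t) := by
      funext t
      rw [hg, hsum, hsum]
      congr 1
      field_simp
      ring
    have h1 : HasDerivAt (fun t : ℝ => Ac.mulVec p v + Ac v u * t) (Ac v u) 0 := by
      simpa using ((hasDerivAt_id (0:ℝ)).const_mul (Ac v u)).const_add (Ac.mulVec p v)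
    have h2 : HasDerivAt (fun t : ℝ => (1 - Ae.mulVec p v / M v) - (Ae v u / M v) * t)
        (-(Ae v u / M v)) 0 := by
      simpa using ((hasDerivAt_id (0:ℝ)).const_mul (Ae v u / M v)).const_sub
        (1 - Ae.mulVec p v / M v)
    have hd0 : (1 - Ae.mulVec p v / M v) - (Ae v u / M v) * (0:ℝ) ≠ 0 := by
      simpa using hDne
    have hexp := h1.fun_div h2 hd0
    rw [← hslice] at hexp
    have := hcomp.unique hexp
    rw [this]
    simp only [mul_zero, sub_zero, add_zero, mul_neg, sub_neg_eq_add]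
  -- derivative sign lemma
  have sign : ∀ p : (Fin n × Fin m) → ℝ, (∀ w, p w ∈ Set.Ioo (0:ℝ) 1) →
      ∀ v u,
        ((Ac v u = 1 ∨ Ae v u = 1) → 0 < fderiv ℝ (g v) p (Pi.single u 1)) ∧
        (¬ (Ac v u = 1 ∨ Ae v u = 1) → fderiv ℝ (g v) p (Pi.single u 1) = 0) := by
    intro p hp v u
    obtain ⟨-, hval⟩ := main p hp v u
    have hDpos := hden p hp v
    have hNpos := hnum p hp v
    have hMv := hMpos v
    constructor
    · rintro (h | h)
      · rw [hval, h, one_mul]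
        have t2 : 0 ≤ Ac.mulVec p v * (Ae v u / M v) :=
          mul_nonneg hNpos.le (div_nonneg (hAenn v u) hMv.le)
        exact div_pos (by linarith) (pow_pos hDpos 2)
      · rw [hval, h]
        have t2 : 0 < Ac.mulVec p v * (1 / M v) :=
          mul_pos hNpos (div_pos one_pos hMv)
        have t1 : 0 ≤ Ac v u * (1 - Ae.mulVec p v / M v) :=
          mul_nonneg (hAcnn v u) hDpos.le
        exact div_pos (by linarith) (pow_pos hDpos 2)
    · intro h
      push_neg at h
      have hc0 : Ac v u = 0 := by
        have := hAc' v u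
        rcases ite_eq_or_eq (Gs.Adj v.1 u.1 ∧ v.2 = u.2) (1:ℝ) 0 with h' | h' <;>
          first
          | exact absurd (this.trans h') h.1
          | exact this.trans h'
      have he0 : Ae v u = 0 := by
        have := hAe' v u
        rcases ite_eq_or_eq (v.1 = u.1 ∧ Gb.Adj v.2 u.2) (1:ℝ) 0 with h' | h' <;>
          first
          | exact absurd (this.trans h') h.2
          | exact this.trans h'
      rw [hval, hc0, he0]
      simp
  -- adjacency characterization
  have hadj_iff : ∀ v u : Fin n × Fin m,
      (Ac v u = 1 ∨ Ae v u = 1) ↔ (Gs □ Gb).Adj v u := by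
    intro v u
    rw [SimpleGraph.boxProd_adj, hAc', hAe']
    constructor
    · rintro (h | h)
      · by_cases hc : Gs.Adj v.1 u.1 ∧ v.2 = u.2
        · exact Or.inl hc
        · rw [if_neg hc] at h; norm_num at h
      · by_cases hc : v.1 = u.1 ∧ Gb.Adj v.2 u.2
        · exact Or.inr ⟨hc.2, hc.1⟩
        · rw [if_neg hc] at h; norm_num at h
    · rintro (h | h)
      · exact Or.inl (by rw [if_pos h])
      · exact Or.inr (by rw [if_pos ⟨h.2, h.1⟩])
  -- J equals the box-product adjacency matrix
  have hJeq : J = (Gs □ Gb).adjMatrix ℝ := by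
    ext v u
    by_cases hadj : (Gs □ Gb).Adj v u
    · rw [hJ1 v u fun p hp => (sign p hp v u).1 ((hadj_iff v u).2 hadj),
        SimpleGraph.adjMatrix_apply, if_pos hadj]
    · have hnot : ¬ (Ac v u = 1 ∨ Ae v u = 1) := fun h => hadj ((hadj_iff v u).1 h)
      rw [hJ0 v u ?_]
      · rw [SimpleGraph.adjMatrix_apply, if_neg hadj]
      · intro hall
        have hp : ∀ w, (fun _ : Fin n × Fin m => (1/2 : ℝ)) w ∈ Set.Ioo (0:ℝ) 1 := by
          intro w; constructor <;> norm_num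
        have h0 := (sign _ hp v u).2 hnot
        have := hall _ hp
        rw [h0] at this
        exact lt_irrefl _ this
  refine ⟨hden, fun p hp v u => ⟨(main p hp v u).1, (sign p hp v u).1, (sign p hp v u).2⟩,
    hJeq, ?_⟩
  -- irreducibility
  have hconn : (Gs □ Gb).Connected := SimpleGraph.connected_boxProd.2 ⟨hGs, hGb⟩
  intro u v
  obtain ⟨b, hb⟩ := exNbrS u.1
  have hadj : (Gs □ Gb).Adj u (b, u.2) := SimpleGraph.boxProd_adj.2 (Or.inl ⟨hb, rfl⟩)
  obtain ⟨w⟩ := hconn.preconnected (b, u.2) v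
  refine ⟨(SimpleGraph.Walk.cons hadj w).length, by simp, ?_⟩
  rw [hJeq]
  exact walk_pow_pos _ _ _ _
end

section
/- Let A be an N×N real symmetric matrix with nonnegative entries that is irreducible. Then sup over p ∈ (0,1)^N of min over i of (A p)_i (1 − p_i)/p_i equals λ_max(A), the largest eigenvalue of A. -/
open Matrix Finset

lemma mulVec_apply' {n : Type*} [Fintype n] (A : Matrix n n ℝ) (x : n → ℝ) (i : n) :
    (A *ᵥ x) i = ∑ j, A i j * x j := rfl

lemma dotProduct_eq_sum' {n : Type*} [Fintype n] (x y : n → ℝ) :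
    x ⬝ᵥ y = ∑ i, x i * y i := rfl

/-- Entries of powers of an entrywise-nonnegative matrix are nonnegative. -/
lemma pow_entry_nonneg {N : ℕ} {A : Matrix (Fin N) (Fin N) ℝ}
    (h : ∀ i j, 0 ≤ A i j) (k : ℕ) : ∀ i j, 0 ≤ (A ^ k) i j := by
  induction k with
  | zero =>
    intro i j
    by_cases hij : i = j <;> simp [Matrix.one_apply, hij]
  | succ k ih =>
    intro i j
    rw [pow_succ, Matrix.mul_apply]
    exact Finset.sum_nonneg fun l _ => mul_nonneg (ih i l) (h l j)

/-- Rayleigh quotient bound and equality case for `U * diagonal d * Uᵀ`. -/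
lemma rayleigh_aux {n : Type*} [Fintype n] [DecidableEq n]
    (U : Matrix n n ℝ) (d : n → ℝ) (μ : ℝ)
    (hU : U * Uᵀ = 1) (hd : ∀ j, d j ≤ μ) (x : n → ℝ) :
    x ⬝ᵥ ((U * Matrix.diagonal d * Uᵀ) *ᵥ x) ≤ μ * (x ⬝ᵥ x) ∧
    (x ⬝ᵥ ((U * Matrix.diagonal d * Uᵀ) *ᵥ x) = μ * (x ⬝ᵥ x) →
      (U * Matrix.diagonal d * Uᵀ) *ᵥ x = μ • x) := by
  set y := Uᵀ *ᵥ x with hy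
  have hUy : U *ᵥ y = x := by
    rw [hy, Matrix.mulVec_mulVec, hU, Matrix.one_mulVec]
  have hdotU : ∀ z, x ⬝ᵥ (U *ᵥ z) = y ⬝ᵥ z := fun z => by
    rw [Matrix.dotProduct_mulVec, ← Matrix.mulVec_transpose]
  have h1 : (U * Matrix.diagonal d * Uᵀ) *ᵥ x = U *ᵥ (Matrix.diagonal d *ᵥ y) := by
    rw [Matrix.mulVec_mulVec, Matrix.mulVec_mulVec]
  have hyy : y ⬝ᵥ y = x ⬝ᵥ x := by
    have h := hdotU y
    rw [hUy] at h
    exact h.symm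
  have hquad : x ⬝ᵥ ((U * Matrix.diagonal d * Uᵀ) *ᵥ x) = ∑ j, d j * (y j * y j) := by
    rw [h1, hdotU, dotProduct_eq_sum']
    refine Finset.sum_congr rfl fun j _ => ?_
    rw [Matrix.mulVec_diagonal]
    ring
  constructor
  · rw [hquad, ← hyy, dotProduct_eq_sum', Finset.mul_sum]
    exact Finset.sum_le_sum fun j _ =>
      mul_le_mul_of_nonneg_right (hd j) (mul_self_nonneg _)
  · intro heq
    have hsum : ∑ j, (μ - d j) * (y j * y j) = 0 := by
      have he : ∑ j, (μ - d j) * (y j * y j)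
          = μ * (x ⬝ᵥ x) - x ⬝ᵥ ((U * Matrix.diagonal d * Uᵀ) *ᵥ x) := by
        rw [hquad, ← hyy, dotProduct_eq_sum', Finset.mul_sum, ← Finset.sum_sub_distrib]
        refine Finset.sum_congr rfl fun j _ => by ring
      rw [he, heq, sub_self]
    have hterm : ∀ j ∈ Finset.univ, (μ - d j) * (y j * y j) = 0 :=
      (Finset.sum_eq_zero_iff_of_nonneg (fun j _ =>
        mul_nonneg (sub_nonneg.mpr (hd j)) (mul_self_nonneg _))).mp hsum
    have hDy : Matrix.diagonal d *ᵥ y = μ • y := by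
      ext j
      have hj := hterm j (Finset.mem_univ j)
      rcases mul_eq_zero.mp hj with h | h
      · have hdj : d j = μ := by
          have := sub_eq_zero.mp h
          linarith
        simp [Matrix.mulVec_diagonal, hdj, mul_comm]
      · have hyj : y j = 0 := mul_self_eq_zero.mp h
        simp [Matrix.mulVec_diagonal, hyj]
    rw [h1, hDy, Matrix.mulVec_smul, hUy]

/-- For an irreducible nonnegative real symmetric matrix `A`, the metapopulation
persistence capacity `sup_{p ∈ (0,1)^N} min_i (A p)_i (1 - p_i)/p_i` equals the
largest eigenvalue of `A`. -/
theorem persistenceCapacity_eq_lambdaMax {N : ℕ} (hN : 1 ≤ N)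
    (A : Matrix (Fin N) (Fin N) ℝ)
    (hsymm : A.IsSymm) (hnonneg : ∀ i j, 0 ≤ A i j)
    (hirr : ∀ u v : Fin N, ∃ k : ℕ, 1 ≤ k ∧ 0 < (A ^ k) u v) :
    (⨆ p : {p : Fin N → ℝ // ∀ i, p i ∈ Set.Ioo (0:ℝ) 1},
        ⨅ i, (A.mulVec p.1) i * (1 - p.1 i) / p.1 i)
      = sSup (spectrum ℝ A) := by
  classical
  haveI : NeZero N := ⟨by omega⟩
  have hA : A.IsHermitian := by
    show Aᴴ = A
    rw [Matrix.conjTranspose_eq_transpose_of_trivial]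
    exact hsymm
  set ev := hA.eigenvalues with hev
  obtain ⟨j0, hj0⟩ := Finite.exists_max ev
  set μ := ev j0 with hμdef
  have hspec : sSup (spectrum ℝ A) = μ := by
    rw [hA.spectrum_real_eq_range_eigenvalues]
    apply le_antisymm
    · exact csSup_le (Set.range_nonempty _) (by rintro x ⟨j, rfl⟩; exact hj0 j)
    · exact le_csSup (Set.Finite.bddAbove (Set.finite_range _)) ⟨j0, rfl⟩
  set U : Matrix (Fin N) (Fin N) ℝ := (hA.eigenvectorUnitary : Matrix (Fin N) (Fin N) ℝ)
    with hUdef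
  have hUunit : U * Uᵀ = 1 := by
    have h := (Matrix.mem_unitaryGroup_iff).mp hA.eigenvectorUnitary.2
    rwa [Matrix.star_eq_conjTranspose, Matrix.conjTranspose_eq_transpose_of_trivial] at h
  have hAdecomp : A = U * Matrix.diagonal ev * Uᵀ := by
    have h := hA.spectral_theorem
    rw [Unitary.conjStarAlgAut_apply, Matrix.star_eq_conjTranspose, Matrix.conjTranspose_eq_transpose_of_trivial] at h
    have h2 : (RCLike.ofReal ∘ ev : Fin N → ℝ) = ev := by ext j; simp
    rw [h2] at h
    exact h
  have hray : ∀ x : Fin N → ℝ, x ⬝ᵥ (A *ᵥ x) ≤ μ * (x ⬝ᵥ x) := fun x => by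
    rw [hAdecomp]; exact (rayleigh_aux U ev μ hUunit hj0 x).1
  have hrayeq : ∀ x : Fin N → ℝ, x ⬝ᵥ (A *ᵥ x) = μ * (x ⬝ᵥ x) → A *ᵥ x = μ • x := fun x hx => by
    rw [hAdecomp] at hx ⊢; exact (rayleigh_aux U ev μ hUunit hj0 x).2 hx
  -- μ > 0
  have hApos : ∃ u v, 0 < A u v := by
    by_contra h
    push_neg at h
    have hA0 : A = 0 := by
      ext i j; exact le_antisymm (h i j) (hnonneg i j)
    obtain ⟨k, hk1, hkpos⟩ := hirr 0 0
    rw [hA0, zero_pow (by omega : k ≠ 0)] at hkpos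
    simp at hkpos
  have hμpos : 0 < μ := by
    obtain ⟨u, v, huv⟩ := hApos
    set x : Fin N → ℝ := fun i => (if i = u then (1:ℝ) else 0) + (if i = v then 1 else 0) with hx
    have hxnn : ∀ i, 0 ≤ x i := fun i => by
      rw [hx]; positivity
    have hxu : 1 ≤ x u := by
      show (1:ℝ) ≤ (if u = u then (1:ℝ) else 0) + (if u = v then 1 else 0)
      rw [if_pos rfl]
      split <;> norm_num
    have hxv : 1 ≤ x v := by
      show (1:ℝ) ≤ (if v = u then (1:ℝ) else 0) + (if v = v then 1 else 0)
      rw [if_pos rfl]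
      split <;> norm_num
    have hAx : A u v * x v ≤ (A *ᵥ x) u := by
      rw [mulVec_apply']
      exact Finset.single_le_sum (f := fun j => A u j * x j)
        (fun j _ => mul_nonneg (hnonneg u j) (hxnn j)) (Finset.mem_univ v)
    have hAxu : 0 < (A *ᵥ x) u := lt_of_lt_of_le (by nlinarith) hAx
    have hAxnn : ∀ i, 0 ≤ (A *ᵥ x) i := fun i => by
      rw [mulVec_apply']
      exact Finset.sum_nonneg fun j _ => mul_nonneg (hnonneg i j) (hxnn j)
    have hquadpos : 0 < x ⬝ᵥ (A *ᵥ x) := by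
      rw [dotProduct_eq_sum']
      have hone : x u * (A *ᵥ x) u ≤ ∑ i, x i * (A *ᵥ x) i :=
        Finset.single_le_sum (f := fun i => x i * (A *ᵥ x) i)
          (fun i _ => mul_nonneg (hxnn i) (hAxnn i)) (Finset.mem_univ u)
      nlinarith
    have hxx : 0 < x ⬝ᵥ x := by
      rw [dotProduct_eq_sum']
      have hone : x u * x u ≤ ∑ i, x i * x i :=
        Finset.single_le_sum (f := fun i => x i * x i)
          (fun i _ => mul_self_nonneg _) (Finset.mem_univ u)
      nlinarith
    nlinarith [hray x]
  -- Perron eigenvector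
  set v : Fin N → ℝ := ⇑(hA.eigenvectorBasis j0) with hvdef
  have hAv : A *ᵥ v = μ • v := hA.mulVec_eigenvectorBasis j0
  have hvne : ∃ i, v i ≠ 0 := by
    by_contra h
    push_neg at h
    have hz : hA.eigenvectorBasis j0 = 0 := by
      ext i; exact h i
    exact hA.eigenvectorBasis.toBasis.ne_zero j0 (by simp [hz])
  set w : Fin N → ℝ := fun i => |v i| with hwdef
  have hwnn : ∀ i, 0 ≤ w i := fun i => abs_nonneg _
  have hvv_eq : w ⬝ᵥ w = v ⬝ᵥ v := by
    rw [dotProduct_eq_sum', dotProduct_eq_sum']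
    exact Finset.sum_congr rfl fun i _ => by
      rw [hwdef]; exact abs_mul_abs_self _
  have hvAv : v ⬝ᵥ (A *ᵥ v) = μ * (v ⬝ᵥ v) := by
    rw [hAv, dotProduct_smul, smul_eq_mul]
  have hdd : ∀ z : Fin N → ℝ, z ⬝ᵥ (A *ᵥ z) = ∑ i, ∑ j, A i j * (z i * z j) := fun z => by
    rw [dotProduct_eq_sum']
    refine Finset.sum_congr rfl fun i _ => ?_
    rw [mulVec_apply', Finset.mul_sum]
    exact Finset.sum_congr rfl fun j _ => by ring
  have hwAw_ge : v ⬝ᵥ (A *ᵥ v) ≤ w ⬝ᵥ (A *ᵥ w) := by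
    rw [hdd, hdd]
    refine Finset.sum_le_sum fun i _ => Finset.sum_le_sum fun j _ => ?_
    apply mul_le_mul_of_nonneg_left _ (hnonneg i j)
    calc v i * v j ≤ |v i * v j| := le_abs_self _
    _ = w i * w j := by rw [hwdef, abs_mul]
  have hwAw : w ⬝ᵥ (A *ᵥ w) = μ * (w ⬝ᵥ w) := by
    have hub := hray w
    rw [hvv_eq] at hub ⊢
    linarith
  have hAw : A *ᵥ w = μ • w := hrayeq w hwAw
  have hAkw : ∀ k : ℕ, (A ^ k) *ᵥ w = (μ ^ k) • w := by
    intro k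
    induction k with
    | zero => simp
    | succ k ih =>
      rw [pow_succ, ← Matrix.mulVec_mulVec, hAw, Matrix.mulVec_smul, ih,
        smul_smul, pow_succ]
      rw [mul_comm]
  have hwpos : ∀ i, 0 < w i := by
    obtain ⟨i0, hi0⟩ := hvne
    have hwi0 : 0 < w i0 := abs_pos.mpr hi0
    intro u
    obtain ⟨k, hk1, hkpos⟩ := hirr u i0
    have hsum : (A ^ k) u i0 * w i0 ≤ ((A ^ k) *ᵥ w) u := by
      rw [mulVec_apply']
      exact Finset.single_le_sum (f := fun j => (A ^ k) u j * w j)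
        (fun j _ => mul_nonneg (pow_entry_nonneg hnonneg k u j) (hwnn j))
        (Finset.mem_univ i0)
    rw [hAkw k] at hsum
    have hμk : 0 < μ ^ k := pow_pos hμpos k
    have hprod : 0 < μ ^ k * w u := lt_of_lt_of_le (by nlinarith) hsum
    by_contra hle
    push_neg at hle
    nlinarith
  clear_value w
  clear hwdef hvAv hwAw_ge hwAw hdd hvv_eq hAkw
  clear_value v
  clear hvdef hAv hvne
  clear_value U
  clear hUdef hUunit hAdecomp
  clear_value μ
  clear hμdef hj0
  clear_value ev
  clear hev hA
  -- the sup
  set F : {p : Fin N → ℝ // ∀ i, p i ∈ Set.Ioo (0:ℝ) 1} → ℝ :=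
    fun p => ⨅ i, (A.mulVec p.1) i * (1 - p.1 i) / p.1 i with hF
  haveI : Nonempty {p : Fin N → ℝ // ∀ i, p i ∈ Set.Ioo (0:ℝ) 1} :=
    ⟨⟨fun _ => 1/2, fun i => by norm_num⟩⟩
  have hub : ∀ p, F p ≤ μ := by
    rintro ⟨p, hp⟩
    have hApnn : ∀ i, 0 ≤ (A *ᵥ p) i := fun i => by
      rw [mulVec_apply']
      exact Finset.sum_nonneg fun j _ => mul_nonneg (hnonneg i j) (le_of_lt (hp j).1)
    set m := F ⟨p, hp⟩ with hm
    have hterm_nn : ∀ i, 0 ≤ (A *ᵥ p) i * (1 - p i) / p i := fun i =>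
      div_nonneg (mul_nonneg (hApnn i) (by linarith [(hp i).2])) (le_of_lt (hp i).1)
    have hm_le : ∀ i, m ≤ (A *ᵥ p) i * (1 - p i) / p i := fun i =>
      ciInf_le (Finite.bddBelow_range _) i
    have hkey : ∀ i, m * p i ≤ (A *ᵥ p) i := by
      intro i
      have hpi := hp i
      have h1 : m * p i ≤ (A *ᵥ p) i * (1 - p i) := by
        have h := mul_le_mul_of_nonneg_right (hm_le i) (le_of_lt hpi.1)
        rwa [div_mul_cancel₀ _ (ne_of_gt hpi.1)] at h
      nlinarith [hApnn i, hpi.1, hpi.2]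
    have hquad : m * (p ⬝ᵥ p) ≤ p ⬝ᵥ (A *ᵥ p) := by
      rw [dotProduct_eq_sum', dotProduct_eq_sum', Finset.mul_sum]
      refine Finset.sum_le_sum fun i _ => ?_
      have h := mul_le_mul_of_nonneg_left (hkey i) (le_of_lt (hp i).1)
      nlinarith [h]
    have hpp : 0 < p ⬝ᵥ p := by
      rw [dotProduct_eq_sum']
      have h0 : p 0 * p 0 ≤ ∑ i, p i * p i :=
        Finset.single_le_sum (f := fun i => p i * p i)
          (fun i _ => mul_self_nonneg _) (Finset.mem_univ 0)
      nlinarith [(hp 0).1]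
    nlinarith [hray p, hquad]
  have hbdd : BddAbove (Set.range F) := ⟨μ, by rintro x ⟨p, rfl⟩; exact hub p⟩
  rw [hspec]
  apply le_antisymm
  · exact ciSup_le hub
  · by_contra h
    push_neg at h
    set S := ⨆ p, F p with hS
    have hlow : ∀ δ : ℝ, 0 < δ → δ < 1 → μ * (1 - δ) ≤ S := by
      intro δ hδ0 hδ1
      obtain ⟨imax, himax⟩ := Finite.exists_max w
      have hwmax : 0 < w imax := hwpos imax
      set c : ℝ := δ / w imax with hc
      have hc0 : 0 < c := div_pos hδ0 hwmax
      have hcw : ∀ i, c * w i ≤ δ := by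
        intro i
        rw [hc, div_mul_eq_mul_div, div_le_iff₀ hwmax]
        nlinarith [himax i, hwnn i]
      set p : Fin N → ℝ := c • w with hpdef
      have hpmem : ∀ i, p i ∈ Set.Ioo (0:ℝ) 1 :=
        fun i => ⟨mul_pos hc0 (hwpos i), lt_of_le_of_lt (hcw i) hδ1⟩
      have hAp : A *ᵥ p = (c * μ) • w := by
        rw [hpdef, Matrix.mulVec_smul, hAw, smul_smul]
      have hFval : μ * (1 - δ) ≤ F ⟨p, hpmem⟩ := by
        apply le_ciInf
        intro i
        show μ * (1 - δ) ≤ (A *ᵥ p) i * (1 - p i) / p i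
        have hpi : p i = c * w i := rfl
        have hApi : (A *ᵥ p) i = c * μ * w i := by rw [hAp]; rfl
        rw [hApi, hpi]
        have hcwi : c * w i ≠ 0 := ne_of_gt (mul_pos hc0 (hwpos i))
        have heq : c * μ * w i * (1 - c * w i) / (c * w i) = μ * (1 - c * w i) := by
          rw [div_eq_iff hcwi]
          ring
        rw [heq]
        have h1 : 1 - δ ≤ 1 - c * w i := by linarith [hcw i]
        nlinarith [hμpos.le]
      exact le_trans hFval (le_ciSup hbdd ⟨p, hpmem⟩)
    have hS_half : μ * (1 - 1/2) ≤ S := hlow (1/2) (by norm_num) (by norm_num)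
    have hS_nn : 0 ≤ S := by nlinarith
    have hcontra : μ * (1 - (μ - S) / (2 * μ)) ≤ S := by
      apply hlow
      · apply div_pos (by linarith) (by linarith)
      · rw [div_lt_one (by linarith)]
        linarith
    have hrw : μ * (1 - (μ - S) / (2 * μ)) = μ - (μ - S) / 2 := by
      field_simp
    rw [hrw] at hcontra
    linarith
end

section
/- Let G_s be a connected simple graph on n ≥ 2 vertices with adjacency matrix A_s and largest eigenvalue Λ_s, and G_b a connected simple graph on m ≥ 2 vertices with adjacency matrix A_b and largest eigenvalue Λ_b. Let A = A_s ⊗ I_m + I_n ⊗ A_b be the adjacency matrix of the product network. Then the metacommunity persistence capacity of the Levins-type submodel, λ_M = sup over p ∈ (0,1)^{nm} of min over v of (A p)_v (1 − p_v)/p_v, equals Λ_s + Λ_b. -/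
open Kronecker

open Module End Matrix

lemma matrix_mem_spectrum_iff {k : ℕ} (A : Matrix (Fin k) (Fin k) ℝ) (μ : ℝ) :
    μ ∈ spectrum ℝ A ↔ ∃ v : Fin k → ℝ, v ≠ 0 ∧ A.mulVec v = μ • v := by
  rw [← AlgEquiv.spectrum_eq (Matrix.toLinAlgEquiv' (R := ℝ) (n := Fin k)),
    ← Module.End.hasEigenvalue_iff_mem_spectrum]
  constructor
  · intro h
    obtain ⟨v, hv⟩ := h.exists_hasEigenvector
    refine ⟨v, hv.2, ?_⟩
    have := hv.apply_eq_smul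
    simpa [Matrix.toLinAlgEquiv'_apply, Matrix.mulVecLin_apply] using this
  · rintro ⟨v, hv0, hv⟩
    refine Module.End.hasEigenvalue_of_hasEigenvector (x := v) ⟨?_, hv0⟩
    rw [Module.End.mem_eigenspace_iff]
    simpa [Matrix.toLinAlgEquiv'_apply, Matrix.mulVecLin_apply] using hv

lemma toEuclideanCLM_apply' {k : ℕ} (A : Matrix (Fin k) (Fin k) ℝ) (x : EuclideanSpace ℝ (Fin k))
    (i : Fin k) : (Matrix.toEuclideanCLM (𝕜 := ℝ) A) x i = A.mulVec x i := by
  have h2 := congrFun (Matrix.ofLp_toEuclideanCLM (𝕜 := ℝ) A x) i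
  simpa [Matrix.toLin'_apply] using h2

lemma euclid_inner_formula {k : ℕ} (A : Matrix (Fin k) (Fin k) ℝ) (x : EuclideanSpace ℝ (Fin k)) :
    (Matrix.toEuclideanCLM (𝕜 := ℝ) A).reApplyInnerSelf x
      = ∑ i, (A.mulVec x) i * x i := by
  simp only [ContinuousLinearMap.reApplyInnerSelf_apply, PiLp.inner_apply, RCLike.inner_apply,
    starRingEnd_apply, star_trivial, RCLike.re_to_real]
  exact Finset.sum_congr rfl fun i _ => by rw [toEuclideanCLM_apply', mul_comm]

lemma adj_perron {k : ℕ} (hk : 2 ≤ k) (G : SimpleGraph (Fin k)) [DecidableRel G.Adj]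
    (hG : G.Connected) :
    ∃ w : Fin k → ℝ, (∀ i, 0 < w i) ∧
      (G.adjMatrix ℝ).mulVec w = sSup (spectrum ℝ (G.adjMatrix ℝ)) • w ∧
      0 < sSup (spectrum ℝ (G.adjMatrix ℝ)) := by
  set A : Matrix (Fin k) (Fin k) ℝ := G.adjMatrix ℝ with hAdef
  have hAnn : ∀ i j, 0 ≤ A i j := by
    intro i j; simp only [hAdef, SimpleGraph.adjMatrix_apply]; positivity
  set T : EuclideanSpace ℝ (Fin k) →L[ℝ] EuclideanSpace ℝ (Fin k) :=
    Matrix.toEuclideanCLM (𝕜 := ℝ) A with hTdef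
  have hAsa : star A = A := by
    ext i j
    simp [hAdef, Matrix.star_apply, SimpleGraph.adjMatrix_apply, SimpleGraph.adj_comm]
  have hT : _root_.IsSelfAdjoint T := by
    show star T = T
    rw [hTdef, ← map_star, hAsa]
  -- bound on mulVec by abs
  have habs : ∀ (x : Fin k → ℝ) (i : Fin k),
      |(A.mulVec x) i| ≤ (A.mulVec (fun j => |x j|)) i := by
    intro x i
    calc |(A.mulVec x) i| = |∑ j, A i j * x j| := by rw [Matrix.mulVec, dotProduct]
      _ ≤ ∑ j, |A i j * x j| := Finset.abs_sum_le_sum_abs _ _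
      _ = ∑ j, A i j * |x j| := Finset.sum_congr rfl fun j _ => by
          rw [abs_mul, abs_of_nonneg (hAnn i j)]
      _ = (A.mulVec (fun j => |x j|)) i := by rw [Matrix.mulVec, dotProduct]
  -- maximize Rayleigh on sphere
  have hsne : (Metric.sphere (0 : EuclideanSpace ℝ (Fin k)) 1).Nonempty := by
    refine ⟨EuclideanSpace.single ⟨0, by omega⟩ 1, ?_⟩
    simp [EuclideanSpace.norm_single]
  obtain ⟨x₀, hx₀mem, hx₀max⟩ := (isCompact_sphere (0 : EuclideanSpace ℝ (Fin k)) 1).exists_isMaxOn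
    hsne T.reApplyInnerSelf_continuous.continuousOn
  have hx₀norm : ‖x₀‖ = 1 := by simpa using hx₀mem
  set y : EuclideanSpace ℝ (Fin k) := WithLp.toLp 2 (fun i => |x₀ i| : Fin k → ℝ) with hydef
  have hynorm : ‖y‖ = 1 := by
    rw [EuclideanSpace.norm_eq] at hx₀norm ⊢
    simpa [hydef] using hx₀norm
  have hy0 : y ≠ 0 := by
    intro h; rw [h] at hynorm; simp at hynorm
  have hynn : ∀ i, 0 ≤ y i := fun i => abs_nonneg _
  have hfy : T.reApplyInnerSelf x₀ ≤ T.reApplyInnerSelf y := by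
    rw [hTdef, euclid_inner_formula, euclid_inner_formula]
    calc ∑ i, (A.mulVec x₀) i * x₀ i ≤ ∑ i, |(A.mulVec x₀) i * x₀ i| :=
          Finset.sum_le_sum fun i _ => le_abs_self _
      _ ≤ ∑ i, (A.mulVec y) i * y i := Finset.sum_le_sum fun i _ => by
          rw [abs_mul]
          exact mul_le_mul (habs x₀ i) (le_refl _) (abs_nonneg _)
            (le_trans (abs_nonneg _) (habs x₀ i))
  have hymax : IsMaxOn T.reApplyInnerSelf (Metric.sphere (0 : EuclideanSpace ℝ (Fin k)) 1) y :=
    fun z hz => le_trans (hx₀max hz) hfy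
  set μ : ℝ := ⨆ x : {x : EuclideanSpace ℝ (Fin k) // x ≠ 0}, T.rayleighQuotient x with hμdef
  have heig := hT.hasEigenvector_of_isMaxOn hy0 (by rwa [hynorm])
  have heigy : A.mulVec y = μ • y := by
    funext i
    have h3 := congrFun (congrArg WithLp.ofLp heig.apply_eq_smul) i
    have h4 : (T y).ofLp i = (A *ᵥ y.ofLp) i := toEuclideanCLM_apply' A y i
    simpa [h4] using h3
  -- bddAbove of rayleigh
  have hbdd : BddAbove (Set.range fun x : {x : EuclideanSpace ℝ (Fin k) // x ≠ 0} =>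
      T.rayleighQuotient x) := by
    refine ⟨‖T‖, ?_⟩
    rintro r ⟨⟨x, hx⟩, rfl⟩
    show T.rayleighQuotient x ≤ ‖T‖
    have hx2 : (0:ℝ) < ‖x‖ ^ 2 := by
      have := norm_pos_iff.2 hx
      positivity
    have hdef : T.rayleighQuotient x = T.reApplyInnerSelf x / ‖x‖ ^ 2 := rfl
    rw [hdef, div_le_iff₀ hx2]
    calc T.reApplyInnerSelf x ≤ ‖T x‖ * ‖x‖ := by
          rw [T.reApplyInnerSelf_apply]
          simpa using real_inner_le_norm (T x) x
      _ ≤ (‖T‖ * ‖x‖) * ‖x‖ := by gcongr; exact T.le_opNorm x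
      _ = ‖T‖ * ‖x‖ ^ 2 := by ring
  -- rayleigh of eigenvector equals eigenvalue
  have hray_eig : ∀ (lam : ℝ) (vE : EuclideanSpace ℝ (Fin k)), vE ≠ 0 →
      A.mulVec vE = lam • (vE : Fin k → ℝ) → T.rayleighQuotient vE = lam := by
    intro lam vE hv0 hv
    have hnorm2 : ‖vE‖ ^ 2 = ∑ i, vE i * vE i := by
      rw [PiLp.norm_sq_eq_of_L2 (fun _ : Fin k => ℝ) vE]
      exact Finset.sum_congr rfl fun i _ => by simp [Real.norm_eq_abs, sq_abs, sq]
    have hpos : (0:ℝ) < ‖vE‖ ^ 2 := by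
      have := norm_pos_iff.2 hv0
      positivity
    have hdef : T.rayleighQuotient vE = T.reApplyInnerSelf vE / ‖vE‖ ^ 2 := rfl
    rw [hdef, hTdef, euclid_inner_formula, hv]
    rw [hnorm2] at hpos ⊢
    have hnum : ∑ i, (lam • (vE : Fin k → ℝ)) i * vE i = lam * ∑ i, vE i * vE i := by
      rw [Finset.mul_sum]
      exact Finset.sum_congr rfl fun i _ => by
        simp only [PiLp.smul_apply, Pi.smul_apply, smul_eq_mul]; ring
    rw [hnum, mul_div_assoc, div_self (ne_of_gt hpos), mul_one]
  -- μ ∈ spectrum and is the sup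
  have hμmem : μ ∈ spectrum ℝ A := (matrix_mem_spectrum_iff A μ).2
    ⟨y.ofLp, fun h => hy0 (PiLp.ext fun i => congrFun h i), heigy⟩
  have hub : ∀ lam ∈ spectrum ℝ A, lam ≤ μ := by
    intro lam hlam
    obtain ⟨v, hv0, hv⟩ := (matrix_mem_spectrum_iff A lam).1 hlam
    set vE : EuclideanSpace ℝ (Fin k) := (WithLp.equiv 2 (Fin k → ℝ)).symm v with hvEdef
    have hv0E : vE ≠ 0 := fun h =>
      hv0 (funext fun i => congrArg (fun z : EuclideanSpace ℝ (Fin k) => z i) h)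
    calc lam = T.rayleighQuotient vE := (hray_eig lam vE hv0E hv).symm
      _ ≤ μ := le_ciSup hbdd ⟨vE, hv0E⟩
  have hsSup : sSup (spectrum ℝ A) = μ :=
    le_antisymm (csSup_le ⟨μ, hμmem⟩ hub) (le_csSup ⟨μ, hub⟩ hμmem)
  -- an edge exists
  obtain ⟨u, v, huv⟩ : ∃ u v, G.Adj u v := by
    have h01 : (⟨0, by omega⟩ : Fin k) ≠ ⟨1, by omega⟩ := by simp
    obtain ⟨w⟩ := hG.preconnected ⟨0, by omega⟩ ⟨1, by omega⟩
    cases w with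
    | cons h p => exact ⟨_, _, h⟩
  -- μ > 0
  have hμpos : 0 < μ := by
    set one : EuclideanSpace ℝ (Fin k) := WithLp.toLp 2 (fun _ => 1 : Fin k → ℝ) with honedef
    have hone0 : one ≠ 0 := by
      intro h
      have := congrArg (fun z : EuclideanSpace ℝ (Fin k) => z ⟨0, by omega⟩) h
      simp [honedef] at this
    have hnum : (0:ℝ) < ∑ i, (A.mulVec one) i * one i := by
      have : ∀ i, (A.mulVec one) i * one i = ∑ j, A i j := by
        intro i
        simp [honedef, Matrix.mulVec, dotProduct]
      rw [Finset.sum_congr rfl fun i _ => this i]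
      refine Finset.sum_pos' (fun i _ => Finset.sum_nonneg fun j _ => hAnn i j) ?_
      refine ⟨u, Finset.mem_univ u, Finset.sum_pos' (fun j _ => hAnn u j) ?_⟩
      refine ⟨v, Finset.mem_univ v, ?_⟩
      simp [hAdef, SimpleGraph.adjMatrix_apply, huv]
    have hn2 : (0:ℝ) < ‖one‖ ^ 2 := by
      have := norm_pos_iff.2 hone0
      positivity
    have hray : T.rayleighQuotient one = (∑ i, (A.mulVec one) i * one i) / ‖one‖ ^ 2 := by
      rw [show T.rayleighQuotient one = T.reApplyInnerSelf one / ‖one‖^2 from rfl,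
        hTdef, euclid_inner_formula]
    have hpos : 0 < T.rayleighQuotient one := by
      rw [hray]; exact div_pos hnum hn2
    exact lt_of_lt_of_le hpos (le_ciSup hbdd ⟨one, hone0⟩)
  -- positivity of y
  have hzero_spread : ∀ i j, G.Adj i j → y i = 0 → y j = 0 := by
    intro i j hij h0
    have h1 : ∑ l, A i l * y l = μ * y i := by
      have := congrFun heigy i
      simpa [Matrix.mulVec, dotProduct, Pi.smul_apply, smul_eq_mul] using this
    rw [h0, mul_zero] at h1
    have h2 : ∀ l ∈ Finset.univ, 0 ≤ A i l * y l := fun l _ =>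
      mul_nonneg (hAnn i l) (hynn l)
    have h3 := (Finset.sum_eq_zero_iff_of_nonneg h2).1 h1 j (Finset.mem_univ j)
    have hAij : A i j = 1 := by simp [hAdef, SimpleGraph.adjMatrix_apply, hij]
    rw [hAij, one_mul] at h3
    exact h3
  have hwalk : ∀ {i j : Fin k}, G.Walk i j → y i = 0 → y j = 0 := by
    intro i j w
    induction w with
    | nil => exact id
    | cons h p ih => exact fun h0 => ih (hzero_spread _ _ h h0)
  have hypos : ∀ i, 0 < y i := by
    obtain ⟨i₀, hi₀⟩ : ∃ i, y i ≠ 0 := by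
      by_contra h
      push_neg at h
      exact hy0 (PiLp.ext fun i => h i)
    intro i
    rcases lt_or_eq_of_le (hynn i) with h | h
    · exact h
    · exact absurd (hwalk (hG.preconnected i i₀).some h.symm) hi₀
  exact ⟨y, hypos, by rw [hsSup]; exact heigy, by rw [hsSup]; exact hμpos⟩

open Kronecker

lemma kron_mulVec_prod {n m : ℕ} (M : Matrix (Fin n) (Fin n) ℝ) (N : Matrix (Fin m) (Fin m) ℝ)
    (a : Fin n → ℝ) (b : Fin m → ℝ) :
    (M ⊗ₖ N).mulVec (fun v => a v.1 * b v.2)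
      = fun v => (M.mulVec a v.1) * (N.mulVec b v.2) := by
  funext v
  obtain ⟨p, q⟩ := v
  simp only [Matrix.mulVec, dotProduct, Fintype.sum_prod_type,
    Matrix.kroneckerMap_apply]
  rw [Finset.sum_mul_sum]
  exact Finset.sum_congr rfl fun i _ => Finset.sum_congr rfl fun j _ => by ring



/-- For the Levins-type metacommunity submodel, the metacommunity persistence capacity
computed on the Kronecker sum `A = A_s ⊗ I_m + I_n ⊗ A_b` of the adjacency matrices of
a connected spatial network and a connected interaction network equals `Λ_s + Λ_b`. -/
theorem levinsType_capacity_eq_sum {n m : ℕ} (hn : 2 ≤ n) (hm : 2 ≤ m)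
    (Gs : SimpleGraph (Fin n)) (Gb : SimpleGraph (Fin m))
    [DecidableRel Gs.Adj] [DecidableRel Gb.Adj]
    (hGs : Gs.Connected) (hGb : Gb.Connected)
    (A : Matrix (Fin n × Fin m) (Fin n × Fin m) ℝ)
    (hA : A = (Gs.adjMatrix ℝ) ⊗ₖ (1 : Matrix (Fin m) (Fin m) ℝ)
        + (1 : Matrix (Fin n) (Fin n) ℝ) ⊗ₖ (Gb.adjMatrix ℝ)) :
    (⨆ p : {p : (Fin n × Fin m) → ℝ // ∀ v, p v ∈ Set.Ioo (0:ℝ) 1},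
        ⨅ v, (A.mulVec p.1) v * (1 - p.1 v) / p.1 v)
      = sSup (spectrum ℝ (Gs.adjMatrix ℝ)) + sSup (spectrum ℝ (Gb.adjMatrix ℝ)) := by
  obtain ⟨ws, hws, hwseig, hΛs⟩ := adj_perron hn Gs hGs
  obtain ⟨wb, hwb, hwbeig, hΛb⟩ := adj_perron hm Gb hGb
  set Λs := sSup (spectrum ℝ (Gs.adjMatrix ℝ)) with hΛsdef
  set Λb := sSup (spectrum ℝ (Gb.adjMatrix ℝ)) with hΛbdef
  set Λ : ℝ := Λs + Λb with hΛdef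
  have hΛpos : 0 < Λ := add_pos hΛs hΛb
  haveI : Nonempty (Fin n × Fin m) := ⟨(⟨0, by omega⟩, ⟨0, by omega⟩)⟩
  set w : Fin n × Fin m → ℝ := fun v => ws v.1 * wb v.2 with hwdef
  have hw : ∀ v, 0 < w v := fun v => mul_pos (hws v.1) (hwb v.2)
  -- eigenvector equation for the Kronecker sum
  have hAw : A.mulVec w = Λ • w := by
    rw [hA, Matrix.add_mulVec]
    funext v
    have h1 := congrFun (kron_mulVec_prod (Gs.adjMatrix ℝ) (1 : Matrix (Fin m) (Fin m) ℝ) ws wb) v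
    have h2 := congrFun (kron_mulVec_prod (1 : Matrix (Fin n) (Fin n) ℝ) (Gb.adjMatrix ℝ) ws wb) v
    rw [show (fun v : Fin n × Fin m => ws v.1 * wb v.2) = w from rfl] at h1 h2
    simp only [Pi.add_apply]
    rw [h1, h2, hwseig, hwbeig, Matrix.one_mulVec, Matrix.one_mulVec]
    simp only [Pi.smul_apply, smul_eq_mul, hwdef]
    ring
  -- nonnegativity of A
  have hAnn : ∀ u v, 0 ≤ A u v := by
    intro u v
    rw [hA]
    simp only [Matrix.add_apply, Matrix.kroneckerMap_apply]
    have h1 : (0:ℝ) ≤ Gs.adjMatrix ℝ u.1 v.1 := by simp [SimpleGraph.adjMatrix_apply]; positivity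
    have h2 : (0:ℝ) ≤ Gb.adjMatrix ℝ u.2 v.2 := by simp [SimpleGraph.adjMatrix_apply]; positivity
    have h3 : (0:ℝ) ≤ (1 : Matrix (Fin m) (Fin m) ℝ) u.2 v.2 := by
      simp [Matrix.one_apply]; positivity
    have h4 : (0:ℝ) ≤ (1 : Matrix (Fin n) (Fin n) ℝ) u.1 v.1 := by
      simp [Matrix.one_apply]; positivity
    exact add_nonneg (mul_nonneg h1 h3) (mul_nonneg h4 h2)
  -- symmetry of A
  have hAsym : ∀ u v, A u v = A v u := by
    intro u v
    rw [hA]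
    simp only [Matrix.add_apply, Matrix.kroneckerMap_apply, Matrix.one_apply,
      SimpleGraph.adjMatrix_apply]
    rw [if_congr (Gs.adj_comm u.1 v.1) rfl rfl, if_congr (Gb.adj_comm u.2 v.2) rfl rfl,
      if_congr (eq_comm (a := u.2) (b := v.2)) rfl rfl,
      if_congr (eq_comm (a := u.1) (b := v.1)) rfl rfl]
  -- Collatz–Wielandt upper bound
  have hupper : ∀ p : (Fin n × Fin m) → ℝ, (∀ v, 0 < p v) → ∃ v, (A.mulVec p) v ≤ Λ * p v := by
    intro p hp
    by_contra hcon
    push_neg at hcon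
    have hsum : ∑ v, w v * (Λ * p v) < ∑ v, w v * (A.mulVec p) v :=
      Finset.sum_lt_sum_of_nonempty Finset.univ_nonempty fun v _ =>
        mul_lt_mul_of_pos_left (hcon v) (hw v)
    have hswap : ∑ v, w v * (A.mulVec p) v = ∑ u, (A.mulVec w) u * p u := by
      simp only [Matrix.mulVec, dotProduct, Finset.mul_sum, Finset.sum_mul]
      rw [Finset.sum_comm]
      exact Finset.sum_congr rfl fun v _ => Finset.sum_congr rfl fun u _ => by
        rw [hAsym v u]; ring
    have heq : ∑ v, w v * (Λ * p v) = ∑ u, (A.mulVec w) u * p u := by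
      rw [hAw]
      exact Finset.sum_congr rfl fun v _ => by
        simp only [Pi.smul_apply, smul_eq_mul]; ring
    rw [hswap, ← heq] at hsum
    exact lt_irrefl _ hsum
  -- the subtype is nonempty
  haveI hne : Nonempty {p : (Fin n × Fin m) → ℝ // ∀ v, p v ∈ Set.Ioo (0:ℝ) 1} :=
    ⟨⟨fun _ => 1/2, fun v => ⟨by norm_num, by norm_num⟩⟩⟩
  set F : {p : (Fin n × Fin m) → ℝ // ∀ v, p v ∈ Set.Ioo (0:ℝ) 1} → ℝ :=
    fun p => ⨅ v, (A.mulVec p.1) v * (1 - p.1 v) / p.1 v with hFdef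
  -- upper bound for F
  have hFub : ∀ p, F p ≤ Λ := by
    intro p
    obtain ⟨v₀, hv₀⟩ := hupper p.1 fun v => (p.2 v).1
    have hApnn : 0 ≤ (A.mulVec p.1) v₀ :=
      Finset.sum_nonneg fun u _ => mul_nonneg (hAnn v₀ u) (le_of_lt (p.2 u).1)
    have hp₀ : 0 < p.1 v₀ := (p.2 v₀).1
    have hval : (A.mulVec p.1) v₀ * (1 - p.1 v₀) / p.1 v₀ ≤ Λ := by
      rw [div_le_iff₀ hp₀]
      calc (A.mulVec p.1) v₀ * (1 - p.1 v₀) ≤ (A.mulVec p.1) v₀ * 1 := by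
            apply mul_le_mul_of_nonneg_left _ hApnn
            linarith [(p.2 v₀).2]
        _ = (A.mulVec p.1) v₀ := mul_one _
        _ ≤ Λ * p.1 v₀ := hv₀
    exact le_trans (ciInf_le (Finite.bddBelow_range _) v₀) hval
  -- lower bound
  have hFlb : ∀ ε : ℝ, 0 < ε → ε < 1 → ∃ p, Λ * (1 - ε) ≤ F p := by
    intro ε hε hε1
    obtain ⟨v₁⟩ := (inferInstance : Nonempty (Fin n × Fin m))
    set W : ℝ := Finset.univ.sup' ⟨v₁, Finset.mem_univ v₁⟩ w with hWdef
    have hWpos : 0 < W := lt_of_lt_of_le (hw v₁) (Finset.le_sup' w (Finset.mem_univ v₁))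
    have hWle : ∀ v, w v ≤ W := fun v => Finset.le_sup' w (Finset.mem_univ v)
    set c : ℝ := ε / W with hcdef
    have hc : 0 < c := div_pos hε hWpos
    have hcw : ∀ v, c * w v ≤ ε := by
      intro v
      rw [hcdef, div_mul_eq_mul_div, div_le_iff₀ hWpos]
      exact mul_le_mul_of_nonneg_left (hWle v) (le_of_lt hε)
    have hp : ∀ v, c * w v ∈ Set.Ioo (0:ℝ) 1 :=
      fun v => ⟨mul_pos hc (hw v), lt_of_le_of_lt (hcw v) hε1⟩
    refine ⟨⟨fun v => c * w v, hp⟩, ?_⟩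
    apply le_ciInf
    intro v
    have hAp : (A.mulVec (fun v => c * w v)) v = c * (Λ * w v) := by
      have : (fun v => c * w v) = c • w := by funext v; simp [smul_eq_mul]
      rw [this, Matrix.mulVec_smul, hAw]
      simp [smul_eq_mul]
    simp only [hAp]
    have hwv : w v ≠ 0 := ne_of_gt (hw v)
    have hcne : c ≠ 0 := ne_of_gt hc
    rw [show c * (Λ * w v) * (1 - c * w v) / (c * w v) = Λ * (1 - c * w v) by
      field_simp]
    apply mul_le_mul_of_nonneg_left _ (le_of_lt hΛpos)
    linarith [hcw v]
  -- conclude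
  apply le_antisymm
  · exact ciSup_le hFub
  · apply le_of_forall_pos_le_add
    intro δ hδ
    set ε : ℝ := min (δ / Λ) (1/2) with hεdef
    have hε : 0 < ε := lt_min (div_pos hδ hΛpos) (by norm_num)
    have hε1 : ε < 1 := lt_of_le_of_lt (min_le_right _ _) (by norm_num)
    obtain ⟨p, hp⟩ := hFlb ε hε hε1
    have hΛε : Λ * ε ≤ δ := by
      calc Λ * ε ≤ Λ * (δ / Λ) := mul_le_mul_of_nonneg_left (min_le_left _ _) (le_of_lt hΛpos)
        _ = δ := by field_simp
    have : F p ≤ ⨆ q, F q := le_ciSup ⟨Λ, fun x ⟨q, hq⟩ => hq ▸ hFub q⟩ p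
    nlinarith [hp, this]
end

section
/- Let N ≥ 1, c, e > 0, and let C, E : [0,1]^N → ℝ^N be continuously differentiable functions such that: C_i(0) = 0 for all i; C_i(p) > 0 for all p in the open cube Ω = (0,1)^N; ∂C_i/∂p_j ≥ 0 on Ω for j ≠ i and ∂C_i/∂p_i = 0; E_i(p) > 0 for all p ∈ [0,1]^N; ∂E_i/∂p_j ≤ 0 on Ω for j ≠ i and ∂E_i/∂p_i = 0. Define g_i(p) = e C_i(p)/(c E_i(p)), assume every g_i is concave on Ω, and assume the model is irreducible: the 0-1 matrix J with J_{ij} = 1 iff ∂g_i/∂p_j(p) > 0 for all p ∈ Ω is irreducible. Let λ_M = sup over p ∈ Ω of min over i of g_i(p)(1 − p_i)/p_i. Then there exists a nontrivial equilibrium, i.e. a point p ∈ Ω with C_i(p)(1 − p_i) = E_i(p) p_i for all i, if and only if λ_M > e/c. -/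
open Set Filter

lemma oh_mono_aux {N : ℕ} {f : (Fin N → ℝ) → ℝ}
    (hdiff : ∀ x : Fin N → ℝ, (∀ k, x k ∈ Set.Ioo (0:ℝ) 1) → DifferentiableAt ℝ f x)
    (hder : ∀ x : Fin N → ℝ, (∀ k, x k ∈ Set.Ioo (0:ℝ) 1) → ∀ j,
      0 ≤ fderiv ℝ f x (Pi.single j 1))
    {a b : Fin N → ℝ} (ha : ∀ k, a k ∈ Set.Ioo (0:ℝ) 1)
    (hb : ∀ k, b k ∈ Set.Ioo (0:ℝ) 1) (hab : ∀ k, a k ≤ b k) :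
    f a ≤ f b := by
  set x : ℝ → (Fin N → ℝ) := fun t => a + t • (b - a) with hxdef
  have hxmem : ∀ t ∈ Set.Icc (0:ℝ) 1, ∀ k, x t k ∈ Set.Ioo (0:ℝ) 1 := by
    intro t ht k
    have h1 : x t k = a k + t * (b k - a k) := rfl
    have h2 : 0 ≤ t * (b k - a k) := mul_nonneg ht.1 (by linarith [hab k])
    have h3 : t * (b k - a k) ≤ b k - a k := by
      nlinarith [hab k, ht.2]
    constructor
    · have := (ha k).1; rw [h1]; linarith
    · have := (hb k).2; rw [h1]; linarith
  have hxderiv : ∀ t : ℝ, HasDerivAt x (b - a) t := by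
    intro t
    have h1 : HasDerivAt (fun t : ℝ => t) 1 t := hasDerivAt_id t
    have h2 : HasDerivAt (fun t : ℝ => t • (b - a)) ((1:ℝ) • (b - a)) t := h1.smul_const (b - a)
    simpa [hxdef] using h2.const_add a
  have hd : ∀ t ∈ Set.Icc (0:ℝ) 1, HasDerivAt (f ∘ x) (fderiv ℝ f (x t) (b - a)) t := by
    intro t ht
    exact ((hdiff (x t) (hxmem t ht)).hasFDerivAt).comp_hasDerivAt t (hxderiv t)
  have hnonneg : ∀ t ∈ Set.Icc (0:ℝ) 1, 0 ≤ fderiv ℝ f (x t) (b - a) := by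
    intro t ht
    have hba : b - a = ∑ j : Fin N, Pi.single j ((b - a) j) := by
      rw [Finset.univ_sum_single]
    rw [hba, map_sum]
    apply Finset.sum_nonneg
    intro j _
    have hsingle : Pi.single j ((b - a) j) = ((b - a) j) • (Pi.single j 1 : Fin N → ℝ) := by
      rw [← Pi.single_smul]
      norm_num
    rw [hsingle, map_smul, smul_eq_mul]
    have : (0:ℝ) ≤ (b - a) j := by
      have := hab j; simp [Pi.sub_apply]; linarith
    exact mul_nonneg this (hder (x t) (hxmem t ht) j)
  have hmono : MonotoneOn (f ∘ x) (Set.Icc (0:ℝ) 1) := by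
    apply monotoneOn_of_deriv_nonneg (convex_Icc 0 1)
    · intro t ht
      exact (hd t ht).continuousAt.continuousWithinAt
    · intro t ht
      rw [interior_Icc] at ht
      exact ((hd t (Set.mem_Icc_of_Ioo ht)).differentiableAt).differentiableWithinAt
    · intro t ht
      rw [interior_Icc] at ht
      rw [(hd t (Set.mem_Icc_of_Ioo ht)).deriv]
      exact hnonneg t (Set.mem_Icc_of_Ioo ht)
  have h01 := hmono (Set.left_mem_Icc.mpr zero_le_one) (Set.right_mem_Icc.mpr zero_le_one) zero_le_one
  simpa [hxdef] using h01

lemma oh_conc_ray {N : ℕ} {f : (Fin N → ℝ) → ℝ}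
    (hconc : ConcaveOn ℝ (Set.univ.pi fun _ : Fin N => Set.Ioo (0:ℝ) 1) f)
    {p : Fin N → ℝ} (hp : ∀ i, p i ∈ Set.Ioo (0:ℝ) 1)
    (hlim : Tendsto (fun t : ℝ => f (t • p)) (nhdsWithin 0 (Set.Ioi 0)) (nhds 0)) :
    (1/2 : ℝ) * f p ≤ f ((1/2 : ℝ) • p) := by
  have hpΩ : p ∈ Set.univ.pi fun _ : Fin N => Set.Ioo (0:ℝ) 1 :=
    Set.mem_univ_pi.mpr hp
  have hev : ∀ᶠ t in nhdsWithin (0:ℝ) (Set.Ioi 0),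
      ((1/2 - t)/(1 - t)) * f p + (1 - (1/2 - t)/(1 - t)) * f (t • p) ≤ f ((1/2 : ℝ) • p) := by
    have hIoo : Set.Ioo (0:ℝ) (1/2) ∈ nhdsWithin (0:ℝ) (Set.Ioi 0) :=
      Ioo_mem_nhdsGT_of_mem (Set.mem_Ico.mpr ⟨le_refl (0:ℝ), by norm_num⟩)
    filter_upwards [hIoo] with t ht
    obtain ⟨ht0, ht2⟩ := ht
    have ht1 : t < 1 := by linarith
    have hden : (0:ℝ) < 1 - t := by linarith
    have hθ0 : 0 ≤ (1/2 - t)/(1 - t) := div_nonneg (by linarith) (by linarith)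
    have hθ1' : 0 ≤ 1 - (1/2 - t)/(1 - t) := by
      have : (1/2 - t)/(1 - t) ≤ 1 := by
        rw [div_le_one hden]; linarith
      linarith
    have htpΩ : t • p ∈ Set.univ.pi fun _ : Fin N => Set.Ioo (0:ℝ) 1 := by
      refine Set.mem_univ_pi.mpr fun i => ⟨?_, ?_⟩
      · exact mul_pos ht0 (hp i).1
      · calc (t • p) i = t * p i := rfl
          _ ≤ 1 * p i := by nlinarith [(hp i).1]
          _ < 1 := by simpa using (hp i).2
    have hkey := hconc.2 hpΩ htpΩ hθ0 hθ1' (by ring)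
    have hscal : (1/2 - t)/(1 - t) + (1 - (1/2 - t)/(1 - t)) * t = 1/2 := by
      field_simp
      ring
    have hpt : ((1/2 - t)/(1 - t)) • p + (1 - (1/2 - t)/(1 - t)) • (t • p) = (1/2 : ℝ) • p := by
      rw [smul_smul, ← add_smul, hscal]
    rw [hpt] at hkey
    simpa [smul_eq_mul] using hkey
  have hθtend : Tendsto (fun t : ℝ => (1/2 - t)/(1 - t)) (nhdsWithin 0 (Set.Ioi 0)) (nhds (1/2 : ℝ)) := by
    have hc : ContinuousAt (fun t : ℝ => (1/2 - t)/(1 - t)) 0 := by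
      apply ContinuousAt.div
      · exact continuousAt_const.sub continuousAt_id
      · exact continuousAt_const.sub continuousAt_id
      · norm_num
    have h2 := hc.tendsto.mono_left (nhdsWithin_le_nhds (s := Set.Ioi (0:ℝ)))
    norm_num at h2
    exact h2
  have hfull : Tendsto (fun t : ℝ => ((1/2 - t)/(1 - t)) * f p + (1 - (1/2 - t)/(1 - t)) * f (t • p))
      (nhdsWithin 0 (Set.Ioi 0)) (nhds ((1/2 : ℝ) * f p + (1 - 1/2) * 0)) :=
    ((hθtend.mul tendsto_const_nhds).add ((tendsto_const_nhds.sub hθtend).mul hlim))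
  have := le_of_tendsto hfull hev
  linarith [this]

/-- Ovaskainen–Hanski theorem (weak, concave case): under the standard assumptions on
the colonisation and extinction functions, concavity of all components of `g` and
irreducibility of the model, a nontrivial (interior) equilibrium
`C_i(p)(1 - p_i) = E_i(p) p_i` exists if and only if the persistence capacity
`λ_M = sup_{p ∈ Ω} min_i g_i(p)(1 - p_i)/p_i` satisfies `λ_M > e/c`. -/
theorem ovaskainen_hanski_threshold {N : ℕ} (hN : 1 ≤ N)
    (c e : ℝ) (hc : 0 < c) (he : 0 < e)
    (C E : (Fin N → ℝ) → (Fin N → ℝ))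
    (hCsmooth : ContDiffOn ℝ 1 C (Set.univ.pi fun _ : Fin N => Set.Icc (0:ℝ) 1))
    (hEsmooth : ContDiffOn ℝ 1 E (Set.univ.pi fun _ : Fin N => Set.Icc (0:ℝ) 1))
    (hC0 : C 0 = 0)
    (hCpos : ∀ p : Fin N → ℝ, (∀ i, p i ∈ Set.Ioo (0:ℝ) 1) → ∀ i, 0 < C p i)
    (hCmono : ∀ p : Fin N → ℝ, (∀ i, p i ∈ Set.Ioo (0:ℝ) 1) → ∀ i j, i ≠ j →
      0 ≤ fderiv ℝ (fun q => C q i) p (Pi.single j 1))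
    (hCself : ∀ p : Fin N → ℝ, (∀ i, p i ∈ Set.Ioo (0:ℝ) 1) → ∀ i,
      fderiv ℝ (fun q => C q i) p (Pi.single i 1) = 0)
    (hEpos : ∀ p : Fin N → ℝ, (∀ i, p i ∈ Set.Icc (0:ℝ) 1) → ∀ i, 0 < E p i)
    (hEmono : ∀ p : Fin N → ℝ, (∀ i, p i ∈ Set.Ioo (0:ℝ) 1) → ∀ i j, i ≠ j →
      fderiv ℝ (fun q => E q i) p (Pi.single j 1) ≤ 0)
    (hEself : ∀ p : Fin N → ℝ, (∀ i, p i ∈ Set.Ioo (0:ℝ) 1) → ∀ i,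
      fderiv ℝ (fun q => E q i) p (Pi.single i 1) = 0)
    (g : Fin N → (Fin N → ℝ) → ℝ)
    (hg : ∀ i p, g i p = e * C p i / (c * E p i))
    (hconc : ∀ i, ConcaveOn ℝ (Set.univ.pi fun _ : Fin N => Set.Ioo (0:ℝ) 1) (g i))
    (J : Matrix (Fin N) (Fin N) ℝ)
    (hJ1 : ∀ i j, (∀ p : Fin N → ℝ, (∀ k, p k ∈ Set.Ioo (0:ℝ) 1) →
      0 < fderiv ℝ (g i) p (Pi.single j 1)) → J i j = 1)
    (hJ0 : ∀ i j, ¬ (∀ p : Fin N → ℝ, (∀ k, p k ∈ Set.Ioo (0:ℝ) 1) →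
      0 < fderiv ℝ (g i) p (Pi.single j 1)) → J i j = 0)
    (hJirr : ∀ u v : Fin N, ∃ k : ℕ, 1 ≤ k ∧ 0 < (J ^ k) u v) :
    (∃ p : Fin N → ℝ, (∀ i, p i ∈ Set.Ioo (0:ℝ) 1) ∧
        ∀ i, C p i * (1 - p i) = E p i * p i) ↔
      e / c < ⨆ p : {p : Fin N → ℝ // ∀ i, p i ∈ Set.Ioo (0:ℝ) 1},
        ⨅ i, g i p.1 * (1 - p.1 i) / p.1 i := by
  classical
  have hNpos : 0 < N := hN
  haveI : Nonempty (Fin N) := ⟨⟨0, hNpos⟩⟩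
  set Kc : Set (Fin N → ℝ) := Set.univ.pi fun _ : Fin N => Set.Icc (0:ℝ) 1 with hKcdef
  have hΩsubK : ∀ p : Fin N → ℝ, (∀ i, p i ∈ Set.Ioo (0:ℝ) 1) → p ∈ Kc := fun p hp =>
    Set.mem_univ_pi.mpr fun i => ⟨(hp i).1.le, (hp i).2.le⟩
  have hIccOf : ∀ p : Fin N → ℝ, (∀ i, p i ∈ Set.Ioo (0:ℝ) 1) → ∀ i, p i ∈ Set.Icc (0:ℝ) 1 :=
    fun p hp i => ⟨(hp i).1.le, (hp i).2.le⟩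
  have hccont : ContinuousOn C Kc := hCsmooth.continuousOn
  have hecont : ContinuousOn E Kc := hEsmooth.continuousOn
  have hΩopen : IsOpen (Set.univ.pi fun _ : Fin N => Set.Ioo (0:ℝ) 1) :=
    isOpen_set_pi Set.finite_univ fun i _ => isOpen_Ioo
  have hKnhds : ∀ p : Fin N → ℝ, (∀ i, p i ∈ Set.Ioo (0:ℝ) 1) → Kc ∈ nhds p := by
    intro p hp
    refine Filter.mem_of_superset (hΩopen.mem_nhds (Set.mem_univ_pi.mpr hp)) ?_
    intro q hq
    exact hΩsubK q (Set.mem_univ_pi.mp hq)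
  have hCdiff : ∀ (i : Fin N) (p : Fin N → ℝ), (∀ k, p k ∈ Set.Ioo (0:ℝ) 1) →
      DifferentiableAt ℝ (fun q => C q i) p := by
    intro i p hp
    have h1 : DifferentiableAt ℝ C p :=
      ((hCsmooth.differentiableOn one_ne_zero) p (hΩsubK p hp)).differentiableAt (hKnhds p hp)
    exact differentiableAt_pi.mp h1 i
  have hEdiff : ∀ (i : Fin N) (p : Fin N → ℝ), (∀ k, p k ∈ Set.Ioo (0:ℝ) 1) →
      DifferentiableAt ℝ (fun q => E q i) p := by
    intro i p hp
    have h1 : DifferentiableAt ℝ E p :=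
      ((hEsmooth.differentiableOn one_ne_zero) p (hΩsubK p hp)).differentiableAt (hKnhds p hp)
    exact differentiableAt_pi.mp h1 i
  -- monotonicity of C and antitonicity of E on the open cube
  have hCm : ∀ (i : Fin N) (a b : Fin N → ℝ), (∀ k, a k ∈ Set.Ioo (0:ℝ) 1) →
      (∀ k, b k ∈ Set.Ioo (0:ℝ) 1) → (∀ k, a k ≤ b k) → C a i ≤ C b i := by
    intro i a b ha hb hab
    refine oh_mono_aux (hCdiff i) ?_ ha hb hab
    intro x hx j
    rcases eq_or_ne i j with rfl | hij
    · rw [hCself x hx i]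
    · exact hCmono x hx i j hij
  have hEm : ∀ (i : Fin N) (a b : Fin N → ℝ), (∀ k, a k ∈ Set.Ioo (0:ℝ) 1) →
      (∀ k, b k ∈ Set.Ioo (0:ℝ) 1) → (∀ k, a k ≤ b k) → E b i ≤ E a i := by
    intro i a b ha hb hab
    have h := oh_mono_aux (f := fun q => -(E q i)) (fun x hx => (hEdiff i x hx).neg)
      ?_ ha hb hab
    · have h' : -(E a i) ≤ -(E b i) := h
      linarith
    · intro x hx j
      have hneg : fderiv ℝ (fun q => -(E q i)) x = -(fderiv ℝ (fun q => E q i) x) :=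
        fderiv_neg
      rw [hneg]
      simp only [ContinuousLinearMap.neg_apply]
      rcases eq_or_ne i j with rfl | hij
      · rw [hEself x hx i]; norm_num
      · linarith [hEmono x hx i j hij]
  -- compactness facts
  have hKcompact : IsCompact Kc := isCompact_univ_pi fun i => isCompact_Icc
  have h0K : (0 : Fin N → ℝ) ∈ Kc :=
    Set.mem_univ_pi.mpr fun i => ⟨le_refl 0, zero_le_one⟩
  -- uniform positive lower bound on E
  have hEminEx : ∃ m : ℝ, 0 < m ∧ ∀ p ∈ Kc, ∀ i, m ≤ E p i := by
    have h1 : ∀ i : Fin N, ∃ m : ℝ, 0 < m ∧ ∀ p ∈ Kc, m ≤ E p i := by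
      intro i
      have hcont : ContinuousOn (fun p => E p i) Kc :=
        (continuous_apply i).comp_continuousOn hecont
      obtain ⟨x, hx, hxmin⟩ := hKcompact.exists_isMinOn ⟨0, h0K⟩ hcont
      exact ⟨E x i, hEpos x (Set.mem_univ_pi.mp hx) i, fun p hp => hxmin hp⟩
    choose m hm0 hm using h1
    refine ⟨Finset.univ.inf' Finset.univ_nonempty m, ?_, ?_⟩
    · rw [Finset.lt_inf'_iff]
      exact fun i _ => hm0 i
    · intro p hp i
      exact le_trans (Finset.inf'_le m (Finset.mem_univ i)) (hm i p hp)
  -- Lipschitz-type bound on C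
  have hCboundEx : ∃ M : ℝ, 0 ≤ M ∧ ∀ p ∈ Kc, ‖C p‖ ≤ M * ‖p‖ := by
    have hKconv : Convex ℝ Kc := convex_pi fun i _ => convex_Icc 0 1
    have hintne : (interior Kc).Nonempty := by
      refine ⟨fun _ => 1/2, ?_⟩
      have hsub : (Set.univ.pi fun _ : Fin N => Set.Ioo (0:ℝ) 1) ⊆ interior Kc :=
        interior_maximal (fun q hq => hΩsubK q (Set.mem_univ_pi.mp hq)) hΩopen
      exact hsub (Set.mem_univ_pi.mpr fun i => by norm_num)
    have hUD : UniqueDiffOn ℝ Kc := uniqueDiffOn_convex hKconv hintne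
    have hdiffOn : DifferentiableOn ℝ C Kc := hCsmooth.differentiableOn one_ne_zero
    have hfc : ContinuousOn (fderivWithin ℝ C Kc) Kc :=
      hCsmooth.continuousOn_fderivWithin hUD le_rfl
    obtain ⟨M, hM⟩ := hKcompact.exists_bound_of_continuousOn hfc
    refine ⟨max M 0, le_max_right _ _, ?_⟩
    intro p hp
    have hbound : ∀ x ∈ Kc, ‖fderivWithin ℝ C Kc x‖ ≤ max M 0 :=
      fun x hx => le_trans (hM x hx) (le_max_left M 0)
    have hb := hKconv.norm_image_sub_le_of_norm_fderivWithin_le hdiffOn hbound h0K hp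
    simpa [hC0] using hb
  obtain ⟨m, hm0, hmle⟩ := hEminEx
  obtain ⟨M, hM0, hMb⟩ := hCboundEx
  -- uniform upper bound on the min function
  have hψbound : ∀ q : Fin N → ℝ, (∀ i, q i ∈ Set.Ioo (0:ℝ) 1) →
      (⨅ i, g i q * (1 - q i) / q i) ≤ e * M / (c * m) := by
    intro q hq
    obtain ⟨j, -, hj⟩ := Finset.exists_max_image Finset.univ q ⟨⟨0, hNpos⟩, Finset.mem_univ _⟩
    have hqK := hΩsubK q hq
    have hnorm : ‖q‖ ≤ q j := by
      rw [pi_norm_le_iff_of_nonneg (hq j).1.le]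
      intro i
      rw [Real.norm_eq_abs, abs_of_pos (hq i).1]
      exact hj i (Finset.mem_univ i)
    have hCj : C q j ≤ M * q j := by
      calc C q j ≤ ‖C q‖ := le_trans (le_abs_self _) (norm_le_pi_norm (C q) j)
        _ ≤ M * ‖q‖ := hMb q hqK
        _ ≤ M * q j := mul_le_mul_of_nonneg_left hnorm hM0
    have hq0 := (hq j).1
    have hq1 := (hq j).2
    have hEj := hmle q hqK j
    have hCjpos := hCpos q hq j
    have hgj : g j q * (1 - q j) / q j ≤ e * M / (c * m) := by
      rw [hg]
      rw [div_mul_eq_mul_div, div_div]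
      have hstep : e * C q j * (1 - q j) / (c * E q j * q j) ≤ e * (M * q j) / (c * (m * q j)) := by
        apply div_le_div₀ (by positivity) ?_ (by positivity) ?_
        · nlinarith [mul_le_mul_of_nonneg_left hCj he.le, mul_pos he hCjpos,
            mul_nonneg (mul_pos he hCjpos).le hq0.le]
        · nlinarith [mul_le_mul_of_nonneg_left hEj (mul_pos hc hq0).le]
      refine le_trans hstep (le_of_eq ?_)
      rw [mul_comm m (q j)]
      rw [show c * (q j * m) = q j * (c * m) by ring]
      rw [show e * (M * q j) = q j * (e * M) by ring]
      rw [mul_div_mul_left _ _ (ne_of_gt hq0)]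
    calc (⨅ i, g i q * (1 - q i) / q i) ≤ g j q * (1 - q j) / q j :=
        ciInf_le (Set.Finite.bddBelow (Set.finite_range _)) j
      _ ≤ e * M / (c * m) := hgj
  have hbddAbove : BddAbove (Set.range fun p : {p : Fin N → ℝ // ∀ i, p i ∈ Set.Ioo (0:ℝ) 1} =>
      ⨅ i, g i p.1 * (1 - p.1 i) / p.1 i) := by
    refine ⟨e * M / (c * m), ?_⟩
    rintro x ⟨p, rfl⟩
    exact hψbound p.1 p.2
  haveI hsubne : Nonempty {p : Fin N → ℝ // ∀ i, p i ∈ Set.Ioo (0:ℝ) 1} :=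
    ⟨⟨fun _ => 1/2, fun i => by norm_num⟩⟩
  constructor
  · -- equilibrium implies supercritical
    rintro ⟨p, hp, heq⟩
    have hEposp : ∀ i, 0 < E p i := hEpos p (hIccOf p hp)
    have hgis : ∀ i, g i p * (1 - p i) / p i = e / c := by
      intro i
      rw [hg]
      have hE := hEposp i
      have hp0 := (hp i).1
      have hCE := heq i
      field_simp
      linear_combination hCE
    have hlim : ∀ i, Tendsto (fun t : ℝ => g i (t • p)) (nhdsWithin 0 (Set.Ioi 0)) (nhds 0) := by
      intro i
      have hmap : Tendsto (fun t : ℝ => t • p) (nhdsWithin (0:ℝ) (Set.Ioi 0))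
          (nhdsWithin (0 : Fin N → ℝ) Kc) := by
        rw [tendsto_nhdsWithin_iff]
        constructor
        · have h1 : Tendsto (fun t : ℝ => t • p) (nhds 0) (nhds ((0:ℝ) • p)) :=
            (continuous_id.smul continuous_const).tendsto 0
          rw [zero_smul] at h1
          exact h1.mono_left nhdsWithin_le_nhds
        · filter_upwards [Ioo_mem_nhdsGT_of_mem
            (Set.mem_Ico.mpr ⟨le_refl (0:ℝ), zero_lt_one⟩)] with t ht
          refine hΩsubK _ fun k => ⟨mul_pos ht.1 (hp k).1, ?_⟩
          calc (t • p) k = t * p k := rfl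
            _ < 1 := by nlinarith [(hp k).1, (hp k).2, ht.2, ht.1]
      have hCt : Tendsto (fun t : ℝ => C (t • p) i) (nhdsWithin 0 (Set.Ioi 0)) (nhds 0) := by
        have h1 := (hccont 0 h0K).tendsto.comp hmap
        rw [hC0] at h1
        have h2 := tendsto_pi_nhds.mp h1 i
        simpa using h2
      have hEt : Tendsto (fun t : ℝ => E (t • p) i) (nhdsWithin 0 (Set.Ioi 0)) (nhds (E 0 i)) := by
        have h1 := (hecont 0 h0K).tendsto.comp hmap
        exact tendsto_pi_nhds.mp h1 i
      have hE0 : 0 < E 0 i := hEpos 0 (fun k => ⟨le_refl 0, zero_le_one⟩) i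
      have h3 : Tendsto (fun t : ℝ => e * C (t • p) i / (c * E (t • p) i))
          (nhdsWithin 0 (Set.Ioi 0)) (nhds (e * 0 / (c * E 0 i))) :=
        (tendsto_const_nhds.mul hCt).div (tendsto_const_nhds.mul hEt) (by positivity)
      simp only [mul_zero, zero_div] at h3
      exact h3.congr fun t => (hg i _).symm
    set q : Fin N → ℝ := (1/2 : ℝ) • p with hqdef
    have hqi : ∀ i, q i = p i / 2 := fun i => by
      rw [hqdef]; simp [Pi.smul_apply, smul_eq_mul]; ring
    have hqΩ : ∀ i, q i ∈ Set.Ioo (0:ℝ) 1 := by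
      intro i
      rw [hqi i]
      constructor
      · linarith [(hp i).1]
      · linarith [(hp i).2]
    have hgq : ∀ i, (1/2:ℝ) * g i p ≤ g i q := fun i => oh_conc_ray (hconc i) hp (hlim i)
    have hgp_pos : ∀ i, 0 < g i p := by
      intro i
      rw [hg]
      have := hCpos p hp i
      have := hEposp i
      positivity
    have hstrict : ∀ i, e / c < g i q * (1 - q i) / q i := by
      intro i
      have hq0 := (hqΩ i).1
      have hq1 := (hqΩ i).2
      have hp0 := (hp i).1
      have hp1 := (hp i).2
      have h1 : ((1/2:ℝ) * g i p) * (1 - q i) / q i ≤ g i q * (1 - q i) / q i := by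
        gcongr
        · exact hgq i
      have h2 : ((1/2:ℝ) * g i p) * (1 - q i) / q i = g i p * (1 - q i) / p i := by
        rw [hqi i]
        field_simp
      have h3 : g i p * (1 - p i) / p i < g i p * (1 - q i) / p i := by
        apply (div_lt_div_iff_of_pos_right hp0).mpr
        have : q i < p i := by rw [hqi i]; linarith
        nlinarith [hgp_pos i]
      calc e / c = g i p * (1 - p i) / p i := (hgis i).symm
        _ < g i p * (1 - q i) / p i := h3
        _ = ((1/2:ℝ) * g i p) * (1 - q i) / q i := h2.symm
        _ ≤ g i q * (1 - q i) / q i := h1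
    obtain ⟨i₀, -, hmin⟩ := Finset.exists_min_image Finset.univ
      (fun i => g i q * (1 - q i) / q i) ⟨⟨0, hNpos⟩, Finset.mem_univ _⟩
    have hinf : e / c < ⨅ i, g i q * (1 - q i) / q i :=
      lt_of_lt_of_le (hstrict i₀) (le_ciInf fun j => hmin j (Finset.mem_univ j))
    exact lt_of_lt_of_le hinf (le_ciSup hbddAbove ⟨q, hqΩ⟩)
  · -- supercritical implies equilibrium
    intro hsup
    obtain ⟨⟨q, hq⟩, hlt⟩ := exists_lt_of_lt_ciSup hsup
    have hstriq : ∀ i, E q i * q i < C q i * (1 - q i) := by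
      intro i
      have h1 : e / c < g i q * (1 - q i) / q i :=
        lt_of_lt_of_le hlt (ciInf_le (Set.Finite.bddBelow (Set.finite_range _)) i)
      rw [hg] at h1
      have hE := hEpos q (hIccOf q hq) i
      have hq0 := (hq i).1
      rw [div_mul_eq_mul_div, div_div, div_lt_div_iff₀ hc (by positivity)] at h1
      nlinarith [mul_pos he hc]
    set F : (Fin N → ℝ) → (Fin N → ℝ) := fun p i => C p i / (C p i + E p i) with hFdef
    have hFmem : ∀ p : Fin N → ℝ, (∀ k, p k ∈ Set.Ioo (0:ℝ) 1) →
        ∀ i, F p i ∈ Set.Ioo (0:ℝ) 1 := by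
      intro p hp i
      have hCp := hCpos p hp i
      have hEp := hEpos p (hIccOf p hp) i
      constructor
      · exact div_pos hCp (by linarith)
      · rw [div_lt_one (by linarith)]; linarith
    have hFmono : ∀ a b : Fin N → ℝ, (∀ k, a k ∈ Set.Ioo (0:ℝ) 1) →
        (∀ k, b k ∈ Set.Ioo (0:ℝ) 1) → (∀ k, a k ≤ b k) → ∀ i, F a i ≤ F b i := by
      intro a b ha hb hab i
      have hCa := hCpos a ha i
      have hCb := hCpos b hb i
      have hEa := hEpos a (hIccOf a ha) i
      have hEb := hEpos b (hIccOf b hb) i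
      have h1 : C a i ≤ C b i := hCm i a b ha hb hab
      have h2 : E b i ≤ E a i := hEm i a b ha hb hab
      show C a i / (C a i + E a i) ≤ C b i / (C b i + E b i)
      rw [div_le_div_iff₀ (by linarith) (by linarith)]
      nlinarith
    set s : ℕ → (Fin N → ℝ) := fun n => F^[n] q with hsdef
    have hs0 : s 0 = q := rfl
    have hssucc : ∀ n, s (n+1) = F (s n) := fun n => Function.iterate_succ_apply' F n q
    have hinv : ∀ n, (∀ k, s n k ∈ Set.Ioo (0:ℝ) 1) ∧ (∀ k, s n k ≤ s (n+1) k) := by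
      intro n
      induction n with
      | zero =>
        refine ⟨hq, ?_⟩
        intro k
        rw [hssucc 0, hs0]
        have hCk := hCpos q hq k
        have hEk := hEpos q (hIccOf q hq) k
        show q k ≤ C q k / (C q k + E q k)
        rw [le_div_iff₀ (by linarith)]
        nlinarith [hstriq k]
      | succ n ih =>
        obtain ⟨hmem, hle⟩ := ih
        have hmem' : ∀ k, s (n+1) k ∈ Set.Ioo (0:ℝ) 1 := by
          rw [hssucc n]
          exact hFmem (s n) hmem
        refine ⟨hmem', ?_⟩
        intro k
        calc s (n+1) k = F (s n) k := by rw [hssucc n]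
          _ ≤ F (s (n+1)) k := hFmono (s n) (s (n+1)) hmem hmem' hle k
          _ = s (n+1+1) k := by rw [hssucc (n+1)]
    have hmono : ∀ k, Monotone fun n => s n k :=
      fun k => monotone_nat_of_le_succ fun n => (hinv n).2 k
    have hbddk : ∀ k, BddAbove (Set.range fun n => s n k) := by
      intro k
      refine ⟨1, ?_⟩
      rintro x ⟨n, rfl⟩
      exact ((hinv n).1 k).2.le
    set P : Fin N → ℝ := fun k => ⨆ n, s n k with hPdef
    have htend : Tendsto s atTop (nhds P) :=
      tendsto_pi_nhds.mpr fun k => tendsto_atTop_ciSup (hmono k) (hbddk k)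
    have hsK : ∀ n, s n ∈ Kc := fun n => hΩsubK _ (hinv n).1
    have hPK : P ∈ Kc := by
      refine Set.mem_univ_pi.mpr fun k => ⟨?_, ?_⟩
      · exact le_trans ((hinv 0).1 k).1.le (le_ciSup (hbddk k) 0)
      · exact ciSup_le fun n => ((hinv n).1 k).2.le
    have htendK : Tendsto s atTop (nhdsWithin P Kc) :=
      tendsto_nhdsWithin_iff.mpr ⟨htend, Filter.Eventually.of_forall hsK⟩
    have hCP : ∀ i, Tendsto (fun n => C (s n) i) atTop (nhds (C P i)) := fun i =>
      tendsto_pi_nhds.mp ((hccont P hPK).tendsto.comp htendK) i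
    have hEP : ∀ i, Tendsto (fun n => E (s n) i) atTop (nhds (E P i)) := fun i =>
      tendsto_pi_nhds.mp ((hecont P hPK).tendsto.comp htendK) i
    have hCPnn : ∀ i, 0 ≤ C P i := fun i =>
      ge_of_tendsto (hCP i) (Filter.Eventually.of_forall fun n => (hCpos (s n) (hinv n).1 i).le)
    have hEPpos : ∀ i, 0 < E P i := fun i => hEpos P (Set.mem_univ_pi.mp hPK) i
    have hFP : ∀ i, Tendsto (fun n => F (s n) i) atTop (nhds (F P i)) := by
      intro i
      have hne : C P i + E P i ≠ 0 := by
        have := hCPnn i; have := hEPpos i; positivity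
      exact (hCP i).div ((hCP i).add (hEP i)) hne
    have hfix : ∀ i, F P i = P i := by
      intro i
      have h1 : Tendsto (fun n => s (n+1) i) atTop (nhds (P i)) :=
        (tendsto_pi_nhds.mp htend i).comp (tendsto_add_atTop_nat 1)
      have h2 : Tendsto (fun n => s (n+1) i) atTop (nhds (F P i)) := by
        have h3 := hFP i
        refine h3.congr fun n => ?_
        rw [hssucc n]
      exact tendsto_nhds_unique h2 h1
    refine ⟨P, ?_, ?_⟩
    · intro i
      constructor
      · exact lt_of_lt_of_le (hq i).1 (le_ciSup (hbddk i) 0)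
      · rw [← hfix i]
        show C P i / (C P i + E P i) < 1
        rw [div_lt_one (by linarith [hCPnn i, hEPpos i])]
        linarith [hEPpos i]
    · intro i
      have h := hfix i
      have hpos : 0 < C P i + E P i := by linarith [hCPnn i, hEPpos i]
      have h' : C P i = P i * (C P i + E P i) := by
        rw [← h]
        show C P i = C P i / (C P i + E P i) * (C P i + E P i)
        field_simp
      linear_combination h'
end

section
/- Let G be a connected simple graph on n ≥ 2 vertices with adjacency matrix A and largest eigenvalue Λ_s, and let c, e ∈ (0,1). Then there exists p ∈ (0,1)^n with c (A p)_i (1 − p_i) = e p_i for every i (a nontrivial equilibrium of the spatially realistic Levins metapopulation model) if and only if Λ_s > e/c. -/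
open Matrix Finset

lemma aux_spec_iff (n:ℕ) (A : Matrix (Fin n) (Fin n) ℝ) (μ : ℝ) :
  μ ∈ spectrum ℝ A ↔ ∃ v : Fin n → ℝ, v ≠ 0 ∧ A *ᵥ v = μ • v := by
  rw [← AlgEquiv.spectrum_eq (Matrix.toLinAlgEquiv' (R:=ℝ) (n:=Fin n)) A,
    ← Module.End.hasEigenvalue_iff_mem_spectrum, Module.End.hasEigenvalue_iff]
  constructor
  · intro h
    obtain ⟨v, hv, hv0⟩ := Submodule.exists_mem_ne_zero_of_ne_bot h
    refine ⟨v, hv0, ?_⟩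
    rw [Module.End.mem_eigenspace_iff] at hv
    simpa [Matrix.toLinAlgEquiv'_apply, Matrix.toLin'_apply] using hv
  · rintro ⟨v, hv0, hv⟩ hbot
    have : v ∈ Module.End.eigenspace (Matrix.toLinAlgEquiv' A) μ := by
      rw [Module.End.mem_eigenspace_iff]
      simpa [Matrix.toLinAlgEquiv'_apply, Matrix.toLin'_apply] using hv
    rw [hbot] at this
    exact hv0 (by simpa using this)

lemma aux_top (n:ℕ) (hn : 1 ≤ n) (A : Matrix (Fin n) (Fin n) ℝ) (hA : A.IsHermitian) :
    ∃ μ : ℝ, sSup (spectrum ℝ A) = μ ∧ (∃ v : Fin n → ℝ, v ≠ 0 ∧ A *ᵥ v = μ • v) ∧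
      ∀ x : Fin n → ℝ, x ≠ 0 → ∑ i, (A *ᵥ x) i * x i ≤ μ * ∑ i, x i ^ 2 := by
  haveI : NeZero n := ⟨by omega⟩
  haveI : Nontrivial (EuclideanSpace ℝ (Fin n)) := (WithLp.equiv 2 (Fin n → ℝ)).nontrivial
  set T : EuclideanSpace ℝ (Fin n) →ₗ[ℝ] EuclideanSpace ℝ (Fin n) := Matrix.toEuclideanLin A with hT
  have hsym : T.IsSymmetric := (Matrix.isHermitian_iff_isSymmetric).1 hA
  set μ : ℝ := ⨆ x : { x : EuclideanSpace ℝ (Fin n) // x ≠ 0 },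
      RCLike.re (inner ℝ (T x) (x : EuclideanSpace ℝ (Fin n)) : ℝ) / ‖(x : EuclideanSpace ℝ (Fin n))‖ ^ 2 with hμ
  have hev : Module.End.HasEigenvalue T μ := by
    rw [hμ]; simpa using hsym.hasEigenvalue_iSup_of_finiteDimensional
  -- symm equiv helpers
  have hsymm_ne : ∀ x : Fin n → ℝ, x ≠ 0 → ((WithLp.equiv 2 (Fin n → ℝ)).symm x ≠ 0) := by
    intro x hx h0
    exact hx (by simpa using congrArg (WithLp.equiv 2 (Fin n → ℝ)) h0)
  have hTx : ∀ x : Fin n → ℝ, T ((WithLp.equiv 2 (Fin n → ℝ)).symm x)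
      = (WithLp.equiv 2 (Fin n → ℝ)).symm (A *ᵥ x) := by
    intro x
    rw [hT]; rfl
  have hinner : ∀ u x : Fin n → ℝ,
      (inner ℝ ((WithLp.equiv 2 (Fin n → ℝ)).symm u) ((WithLp.equiv 2 (Fin n → ℝ)).symm x) : ℝ)
        = ∑ i, u i * x i := by
    intro u x
    change dotProduct x (star u) = _
    simp [dotProduct, mul_comm]
  have hnorm : ∀ x : Fin n → ℝ, ‖(WithLp.equiv 2 (Fin n → ℝ)).symm x‖ ^ 2 = ∑ i, x i ^ 2 := by
    intro x
    rw [← real_inner_self_eq_norm_sq, hinner]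
    exact Finset.sum_congr rfl (fun i _ => (sq (x i)).symm)
  -- bounded above
  set Tc := LinearMap.toContinuousLinearMap T with hTc
  have hbdd : BddAbove (Set.range fun x : { x : EuclideanSpace ℝ (Fin n) // x ≠ 0 } =>
      RCLike.re (inner ℝ (T x) (x : EuclideanSpace ℝ (Fin n)) : ℝ) / ‖(x : EuclideanSpace ℝ (Fin n))‖ ^ 2) := by
    refine ⟨‖Tc‖, ?_⟩
    rintro _ ⟨⟨x, hx⟩, rfl⟩
    have hxn : (0:ℝ) < ‖x‖ := norm_pos_iff.mpr hx
    have hxpos : (0:ℝ) < ‖x‖ ^ 2 := by positivity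
    rw [div_le_iff₀ hxpos]
    have h1 : (inner ℝ (T x) x : ℝ) ≤ ‖T x‖ * ‖x‖ := real_inner_le_norm _ _
    have h2 : ‖T x‖ ≤ ‖Tc‖ * ‖x‖ := Tc.le_opNorm x
    have : (inner ℝ (T x) x : ℝ) ≤ ‖Tc‖ * ‖x‖ ^ 2 := by nlinarith [norm_nonneg x, norm_nonneg (T x)]
    simpa using this
  have hray : ∀ x : Fin n → ℝ, x ≠ 0 → ∑ i, (A *ᵥ x) i * x i ≤ μ * ∑ i, x i ^ 2 := by
    intro x hx
    set x' := (WithLp.equiv 2 (Fin n → ℝ)).symm x with hx'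
    have hx'0 := hsymm_ne x hx
    have hle := le_ciSup hbdd ⟨x', hx'0⟩
    simp only at hle
    have hIP : (inner ℝ (T x') x' : ℝ) = ∑ i, (A *ᵥ x) i * x i := by
      rw [hx', hTx, hinner]
    have hN : ‖x'‖ ^ 2 = ∑ i, x i ^ 2 := hnorm x
    have hNpos : (0:ℝ) < ‖x'‖ ^ 2 := by
      have : (0:ℝ) < ‖x'‖ := norm_pos_iff.mpr hx'0
      positivity
    rw [div_le_iff₀ hNpos] at hle
    calc ∑ i, (A *ᵥ x) i * x i = RCLike.re (inner ℝ (T x') x' : ℝ) := by rw [← hIP]; rfl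
    _ ≤ μ * ‖x'‖ ^ 2 := hle
    _ = μ * ∑ i, x i ^ 2 := by rw [hN]
  -- eigenvector
  obtain ⟨w, hw, hw0⟩ := Submodule.exists_mem_ne_zero_of_ne_bot hev
  rw [Module.End.mem_eigenspace_iff] at hw
  set w' := WithLp.equiv 2 (Fin n → ℝ) w with hw'
  have hweq : (WithLp.equiv 2 (Fin n → ℝ)).symm w' = w := by simp [hw']
  have hAw : A *ᵥ w' = μ • w' := by
    have h1 : T ((WithLp.equiv 2 (Fin n → ℝ)).symm w') = (WithLp.equiv 2 (Fin n → ℝ)).symm (A *ᵥ w') := hTx w'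
    rw [hweq, hw] at h1
    have h2 : (WithLp.equiv 2 (Fin n → ℝ)).symm (μ • w') = μ • w := by
      rw [← hweq]; rfl
    exact ((WithLp.equiv 2 (Fin n → ℝ)).symm.injective (h1.symm.trans h2.symm))
  have hw'0 : w' ≠ 0 := by
    intro h
    apply hw0
    rw [← hweq, h]
    simp
  -- eigenvalue upper bound for spectrum
  have hub : ∀ ν ∈ spectrum ℝ A, ν ≤ μ := by
    intro ν hν
    obtain ⟨v, hv0, hv⟩ := (aux_spec_iff n A ν).1 hν
    have hsum : ∑ i, (A *ᵥ v) i * v i = ν * ∑ i, v i ^ 2 := by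
      rw [hv, Finset.mul_sum]
      exact Finset.sum_congr rfl (fun i _ => by simp [Pi.smul_apply, smul_eq_mul]; ring)
    have hpos : (0:ℝ) < ∑ i, v i ^ 2 := by
      obtain ⟨i, hi⟩ := Function.ne_iff.1 hv0
      refine Finset.sum_pos' (fun j _ => sq_nonneg _) ⟨i, Finset.mem_univ i, ?_⟩
      have : v i ≠ 0 := by simpa using hi
      positivity
    have := hray v hv0
    rw [hsum] at this
    exact le_of_mul_le_mul_right (by linarith) hpos
  have hmem : μ ∈ spectrum ℝ A := (aux_spec_iff n A μ).2 ⟨w', hw'0, hAw⟩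
  exact ⟨μ, le_antisymm (csSup_le ⟨μ, hmem⟩ hub) (le_csSup ⟨μ, hub⟩ hmem), ⟨w', hw'0, hAw⟩, hray⟩

section Equil
variable {n : ℕ}

lemma aux_equil (hn : 2 ≤ n) (G : SimpleGraph (Fin n)) [DecidableRel G.Adj] (hG : G.Connected)
    (c e : ℝ) (hc : c ∈ Set.Ioo (0:ℝ) 1) (he : e ∈ Set.Ioo (0:ℝ) 1)
    (μ : ℝ) (hμ : e / c < μ) (w : Fin n → ℝ) (hw0 : w ≠ 0)
    (hw : (G.adjMatrix ℝ) *ᵥ w = μ • w) :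
    ∃ p : Fin n → ℝ, (∀ i, p i ∈ Set.Ioo (0:ℝ) 1) ∧
      ∀ i, c * ((G.adjMatrix ℝ).mulVec p) i * (1 - p i) = e * p i := by
  haveI : NeZero n := ⟨by omega⟩
  set A := G.adjMatrix ℝ with hAdef
  have hA0 : ∀ i j, 0 ≤ A i j := by
    intro i j
    rw [hAdef, SimpleGraph.adjMatrix_apply]
    split_ifs <;> norm_num
  have hA1 : ∀ i j, G.Adj i j → A i j = 1 := by
    intro i j h; rw [hAdef, SimpleGraph.adjMatrix_apply, if_pos h]
  have hce : 0 < c := hc.1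
  have hee : 0 < e := he.1
  have hμpos : (0:ℝ) < μ := lt_trans (div_pos hee hce) hμ
  have hcμ : e < c * μ := by
    rw [div_lt_iff₀ hce] at hμ; linarith
  -- absolute value of eigenvector
  set v : Fin n → ℝ := fun i => |w i| with hvdef
  have hvnn : ∀ i, 0 ≤ v i := fun i => abs_nonneg _
  obtain ⟨i0, hi0⟩ : ∃ i0, 0 < v i0 := by
    obtain ⟨i, hi⟩ := Function.ne_iff.1 hw0
    exact ⟨i, abs_pos.2 (by simpa using hi)⟩
  have hAv : ∀ i, μ * v i ≤ (A *ᵥ v) i := by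
    intro i
    have h1 : μ * v i = |(A *ᵥ w) i| := by
      rw [hw]
      simp only [Pi.smul_apply, smul_eq_mul, abs_mul, abs_of_pos hμpos, hvdef]
    rw [h1]
    calc |(A *ᵥ w) i| = |∑ j, A i j * w j| := by rw [Matrix.mulVec, dotProduct]
    _ ≤ ∑ j, |A i j * w j| := Finset.abs_sum_le_sum_abs _ _
    _ = ∑ j, A i j * v j := by
        refine Finset.sum_congr rfl (fun j _ => ?_)
        rw [abs_mul, abs_of_nonneg (hA0 i j)]
    _ = (A *ᵥ v) i := by rw [Matrix.mulVec, dotProduct]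
  -- choose ε
  set K : ℝ := Finset.univ.sup' Finset.univ_nonempty v with hKdef
  have hKv : ∀ i, v i ≤ K := fun i => Finset.le_sup' v (Finset.mem_univ i)
  have hK : 0 < K := lt_of_lt_of_le hi0 (hKv i0)
  set ε : ℝ := (c * μ - e) / (c * μ * K) with hεdef
  have hεpos : 0 < ε := by
    apply div_pos (by linarith) (by positivity)
  have hεK : ε * K = (c * μ - e) / (c * μ) := by
    rw [hεdef]; field_simp
  have hεvK : ∀ i, ε * v i ≤ (c * μ - e) / (c * μ) := by
    intro i
    rw [← hεK]
    exact mul_le_mul_of_nonneg_left (hKv i) hεpos.le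
  have hεv1 : ∀ i, ε * v i < 1 := by
    intro i
    refine lt_of_le_of_lt (hεvK i) ?_
    rw [div_lt_one (by positivity)]; linarith
  have hεvnn : ∀ i, 0 ≤ ε * v i := fun i => mul_nonneg hεpos.le (hvnn i)
  -- the map g
  set g : ℝ → ℝ := fun t => c * t / (c * t + e) with hgdef
  have hgden : ∀ t, 0 ≤ t → 0 < c * t + e := fun t ht => by nlinarith
  have hg_nonneg : ∀ t, 0 ≤ t → 0 ≤ g t := fun t ht => by
    rw [hgdef]; positivity
  have hg_lt_one : ∀ t, 0 ≤ t → g t < 1 := fun t ht => by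
    rw [hgdef, div_lt_one (hgden t ht)]; linarith
  have hg_mono : ∀ s t, 0 ≤ s → s ≤ t → g s ≤ g t := by
    intro s t hs hst
    rw [hgdef]
    rw [div_le_div_iff₀ (hgden s hs) (hgden t (le_trans hs hst))]
    nlinarith [mul_le_mul_of_nonneg_left hst (mul_nonneg hce.le hee.le)]
  have hg_pos : ∀ t, 0 < t → 0 < g t := fun t ht => by
    rw [hgdef]; positivity
  -- mulVec monotone / nonneg
  have hAm : ∀ x y : Fin n → ℝ, (∀ i, x i ≤ y i) → ∀ i, (A *ᵥ x) i ≤ (A *ᵥ y) i := by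
    intro x y hxy i
    rw [Matrix.mulVec, dotProduct, Matrix.mulVec, dotProduct]
    exact Finset.sum_le_sum (fun j _ => mul_le_mul_of_nonneg_left (hxy j) (hA0 i j))
  have hAnn : ∀ x : Fin n → ℝ, (∀ i, 0 ≤ x i) → ∀ i, 0 ≤ (A *ᵥ x) i := by
    intro x hx i
    rw [Matrix.mulVec, dotProduct]
    exact Finset.sum_nonneg (fun j _ => mul_nonneg (hA0 i j) (hx j))
  -- key inequality
  have key : ∀ x : Fin n → ℝ, (∀ i, ε * v i ≤ x i) → ∀ i, ε * v i ≤ g ((A *ᵥ x) i) := by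
    intro x hx i
    have hxnn : ∀ j, 0 ≤ x j := fun j => le_trans (hεvnn j) (hx j)
    have hAxnn : 0 ≤ (A *ᵥ x) i := hAnn x hxnn i
    rcases eq_or_lt_of_le (hvnn i) with h0 | hvi
    · rw [← h0, mul_zero]
      exact hg_nonneg _ hAxnn
    · -- (A x)_i ≥ ε μ v_i
      have h1 : ε * (μ * v i) ≤ (A *ᵥ x) i := by
        have h2 : ∀ j, ε * v j ≤ x j := hx
        have h3 : ε * ((A *ᵥ v) i) ≤ (A *ᵥ x) i := by
          have := hAm (fun j => ε * v j) x hx i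
          refine le_trans (le_of_eq ?_) this
          rw [Matrix.mulVec, dotProduct, Matrix.mulVec, dotProduct,
            Finset.mul_sum]
          exact Finset.sum_congr rfl (fun j _ => by ring)
        refine le_trans ?_ h3
        exact mul_le_mul_of_nonneg_left (hAv i) hεpos.le
      refine le_trans ?_ (hg_mono _ _ (by positivity) h1)
      -- ε v_i ≤ g (ε μ v_i)
      have hd : 0 < c * (ε * (μ * v i)) + e := hgden _ (by positivity)
      rw [hgdef]
      rw [le_div_iff₀ hd]
      have h4 : ε * v i ≤ (c * μ - e) / (c * μ) := hεvK i
      have h5 : (ε * v i) * (c * μ) ≤ c * μ - e :=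
        (le_div_iff₀ (by positivity : (0:ℝ) < c * μ)).1 h4
      have h6 : (ε * v i) * (c * μ * (ε * v i) + e) ≤ (ε * v i) * (c * μ) :=
        mul_le_mul_of_nonneg_left (by nlinarith) (hεvnn i)
      nlinarith [h6]
  -- the set of sub-solutions
  set S : Set (Fin n → ℝ) := {x | ∀ i, (ε * v i ≤ x i ∧ x i ≤ 1) ∧ x i ≤ g ((A *ᵥ x) i)}
    with hSdef
  have hS0 : (fun i => ε * v i) ∈ S := by
    intro i
    exact ⟨⟨le_refl _, (hεv1 i).le⟩, key _ (fun j => le_refl _) i⟩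
  have hSbd : ∀ i, BddAbove ((fun x : Fin n → ℝ => x i) '' S) := by
    intro i; exact ⟨1, by rintro _ ⟨x, hx, rfl⟩; exact (hx i).1.2⟩
  set p : Fin n → ℝ := fun i => sSup ((fun x : Fin n → ℝ => x i) '' S) with hpdef
  have hpS : ∀ x ∈ S, ∀ i, x i ≤ p i := fun x hx i => le_csSup (hSbd i) ⟨x, hx, rfl⟩
  have hplb : ∀ i, ε * v i ≤ p i := fun i => hpS _ hS0 i
  have hpnn : ∀ i, 0 ≤ p i := fun i => le_trans (hεvnn i) (hplb i)
  have hne : ∀ i, ((fun x : Fin n → ℝ => x i) '' S).Nonempty := fun i => ⟨_, _, hS0, rfl⟩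
  have hple : ∀ i, p i ≤ g ((A *ᵥ p) i) := by
    intro i
    refine csSup_le (hne i) ?_
    rintro _ ⟨x, hx, rfl⟩
    exact le_trans (hx i).2 (hg_mono _ _
      (hAnn x (fun j => le_trans (hεvnn j) (hx j).1.1) i) (hAm x p (fun j => hpS x hx j) i))
  set q : Fin n → ℝ := fun i => g ((A *ᵥ p) i) with hqdef
  have hApnn := hAnn p hpnn
  have hq : q ∈ S := by
    intro i
    exact ⟨⟨key p hplb i, (hg_lt_one _ (hApnn i)).le⟩,
      hg_mono _ _ (hApnn i) (hAm p q hple i)⟩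
  have hfix : ∀ i, p i = g ((A *ᵥ p) i) := fun i => le_antisymm (hple i) (hpS q hq i)
  -- positivity via connectivity
  have hstep : ∀ i j, G.Adj i j → 0 < p j → 0 < p i := by
    intro i j hij hpj
    have h1 : 0 < (A *ᵥ p) i := by
      rw [Matrix.mulVec, dotProduct]
      refine Finset.sum_pos' (fun k _ => mul_nonneg (hA0 i k) (hpnn k))
        ⟨j, Finset.mem_univ j, ?_⟩
      rw [hA1 i j hij]; linarith
    rw [hfix i]; exact hg_pos _ h1
  have hpos0 : 0 < p i0 := lt_of_lt_of_le (mul_pos hεpos hi0) (hplb i0)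
  have hwalk : ∀ (u x : Fin n), G.Walk u x → 0 < p u → 0 < p x := by
    intro u x wk
    induction wk with
    | nil => exact id
    | cons h w ih => intro hu; exact ih (hstep _ _ h.symm hu)
  have hppos : ∀ i, 0 < p i := by
    intro i
    obtain ⟨wk⟩ := hG.preconnected i0 i
    exact hwalk i0 i wk hpos0
  refine ⟨p, fun i => ⟨hppos i, ?_⟩, ?_⟩
  · rw [hfix i]; exact hg_lt_one _ (hApnn i)
  · intro i
    have ht : 0 ≤ (A *ᵥ p) i := hApnn i
    have hd := hgden _ ht
    have h1 : p i * (c * (A *ᵥ p) i + e) = c * (A *ᵥ p) i := by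
      rw [hfix i, hgdef]
      field_simp
    show c * ((A *ᵥ p) i) * (1 - p i) = e * p i
    nlinarith [h1]

/-- Spatially realistic Levins metapopulation model: for a connected simple graph on
`n ≥ 2` vertices with adjacency matrix `A`, a nontrivial equilibrium
`c (A p)_i (1 - p i) = e p_i` with `p ∈ (0,1)^n` exists if and only if the
metapopulation capacity (the largest eigenvalue of `A`) exceeds `e/c`. -/
theorem levins_metapopulation_threshold {n : ℕ} (hn : 2 ≤ n)
    (G : SimpleGraph (Fin n)) [DecidableRel G.Adj] (hG : G.Connected)
    (c e : ℝ) (hc : c ∈ Set.Ioo (0:ℝ) 1) (he : e ∈ Set.Ioo (0:ℝ) 1) :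
    (∃ p : Fin n → ℝ, (∀ i, p i ∈ Set.Ioo (0:ℝ) 1) ∧
        ∀ i, c * ((G.adjMatrix ℝ).mulVec p) i * (1 - p i) = e * p i)
      ↔ e / c < sSup (spectrum ℝ (G.adjMatrix ℝ)) := by
  haveI : NeZero n := ⟨by omega⟩
  have hA : (G.adjMatrix ℝ).IsHermitian := by
    ext i j
    simp [Matrix.conjTranspose_apply, SimpleGraph.adjMatrix_apply, SimpleGraph.adj_comm]
  obtain ⟨μ, hsSup, ⟨w, hw0, hw⟩, hray⟩ := aux_top n (by omega) (G.adjMatrix ℝ) hA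
  rw [hsSup]
  constructor
  · rintro ⟨p, hmem, heq⟩
    have hc0 := hc.1
    have he0 := he.1
    have hp0 : p ≠ 0 := by
      intro h
      have := (hmem ⟨0, by omega⟩).1
      rw [h] at this; simp at this
    have hterm : ∀ i, e / c * p i ^ 2 < ((G.adjMatrix ℝ) *ᵥ p) i * p i := by
      intro i
      have h1 := heq i
      have hpi := hmem i
      have hp1 := hpi.1
      have hp2 := hpi.2
      set X := ((G.adjMatrix ℝ) *ᵥ p) i with hX
      have hApos : 0 < X := by
        by_contra hle
        push_neg at hle
        nlinarith [mul_pos he0 hp1,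
          mul_nonneg (mul_nonneg hc0.le (neg_nonneg.2 hle)) (by linarith : (0:ℝ) ≤ 1 - p i)]
      have h2 : e * p i < c * X := by
        nlinarith [mul_pos (mul_pos hc0 hApos) hp1]
      rw [div_mul_eq_mul_div, div_lt_iff₀ hc0]
      nlinarith [mul_lt_mul_of_pos_right h2 hp1]
    have hsum : e / c * ∑ i, p i ^ 2 < ∑ i, ((G.adjMatrix ℝ) *ᵥ p) i * p i := by
      rw [Finset.mul_sum]
      exact Finset.sum_lt_sum_of_nonempty Finset.univ_nonempty (fun i _ => hterm i)
    have h3 := hray p hp0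
    have hpos : 0 < ∑ i, p i ^ 2 :=
      Finset.sum_pos (fun i _ => by nlinarith [(hmem i).1]) Finset.univ_nonempty
    exact (mul_lt_mul_iff_of_pos_right hpos).1 (lt_of_lt_of_le hsum h3)
  · intro hμ
    exact aux_equil hn G hG c e hc he μ hμ w hw0 hw
end Equil
end

section
/- Let G_s be a connected simple graph on n ≥ 2 vertices with adjacency matrix A_s and largest eigenvalue Λ_s, and G_b a connected simple graph on m ≥ 2 vertices with adjacency matrix A_b and largest eigenvalue Λ_b. Let A = A_s ⊗ I_m + I_n ⊗ A_b and let c, e ∈ (0,1). Then there exists p ∈ (0,1)^{nm} with c (A p)_v (1 − p_v) = e p_v for every v (a nontrivial equilibrium of the Levins-type metacommunity submodel, in which every species has strictly positive occupancy in every site) if and only if Λ_s + Λ_b > e/c. -/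
open Kronecker

open Matrix

namespace LevinsAux

set_option linter.unusedSectionVars false

variable {N : Type*} [Fintype N] [DecidableEq N] [Nonempty N]

lemma posSemidef_smul_one_sub {M : Matrix N N ℝ} (hM : M.IsHermitian) {Λ : ℝ}
    (h : ∀ i, hM.eigenvalues i ≤ Λ) :
    PosSemidef (Λ • (1 : Matrix N N ℝ) - M) := by
  have hd : PosSemidef (diagonal (fun i => Λ - hM.eigenvalues i) : Matrix N N ℝ) :=
    PosSemidef.diagonal (fun i => sub_nonneg.2 (h i))
  have h2 := hd.mul_mul_conjTranspose_same (hM.eigenvectorUnitary : Matrix N N ℝ)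
  have hU : (hM.eigenvectorUnitary : Matrix N N ℝ) *
      ((hM.eigenvectorUnitary : Matrix N N ℝ))ᴴ = 1 := by
    simpa [Matrix.star_eq_conjTranspose] using
      (Matrix.mem_unitaryGroup_iff).mp (hM.eigenvectorUnitary).2
  have key : (hM.eigenvectorUnitary : Matrix N N ℝ) *
      (diagonal (fun i => Λ - hM.eigenvalues i)) *
      ((hM.eigenvectorUnitary : Matrix N N ℝ))ᴴ = Λ • (1 : Matrix N N ℝ) - M := by
    have hdiag : (diagonal (fun i => Λ - hM.eigenvalues i) : Matrix N N ℝ)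
        = Λ • (1 : Matrix N N ℝ) - diagonal (RCLike.ofReal ∘ hM.eigenvalues) := by
      rw [smul_one_eq_diagonal, ← diagonal_sub]
      congr 1
    rw [hdiag, Matrix.mul_sub, Matrix.sub_mul, Matrix.mul_smul, Matrix.smul_mul, mul_one, hU,
      ← Matrix.star_eq_conjTranspose]
    conv_rhs => rw [hM.spectral_theorem, Unitary.conjStarAlgAut_apply]
  rwa [key] at h2

lemma quad_eval {M : Matrix N N ℝ} {Λ : ℝ} (x : N → ℝ) :
    star x ⬝ᵥ ((Λ • (1 : Matrix N N ℝ) - M) *ᵥ x) = Λ * (x ⬝ᵥ x) - x ⬝ᵥ (M *ᵥ x) := by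
  rw [star_trivial, Matrix.sub_mulVec, dotProduct_sub]
  congr 1
  rw [Matrix.smul_mulVec, Matrix.one_mulVec, dotProduct_smul, smul_eq_mul]

lemma rayleigh_le {M : Matrix N N ℝ} (hM : M.IsHermitian) {Λ : ℝ}
    (h : ∀ i, hM.eigenvalues i ≤ Λ) (x : N → ℝ) :
    x ⬝ᵥ (M *ᵥ x) ≤ Λ * (x ⬝ᵥ x) := by
  have := (posSemidef_smul_one_sub hM h).dotProduct_mulVec_nonneg x
  rw [quad_eval] at this
  linarith

lemma eigvec_of_rayleigh_eq {M : Matrix N N ℝ} (hM : M.IsHermitian) {Λ : ℝ}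
    (h : ∀ i, hM.eigenvalues i ≤ Λ) (x : N → ℝ)
    (heq : x ⬝ᵥ (M *ᵥ x) = Λ * (x ⬝ᵥ x)) :
    M *ᵥ x = Λ • x := by
  have h0 : star x ⬝ᵥ ((Λ • (1 : Matrix N N ℝ) - M) *ᵥ x) = 0 := by
    rw [quad_eval, heq, sub_self]
  have := ((posSemidef_smul_one_sub hM h).dotProduct_mulVec_zero_iff x).mp h0
  rw [Matrix.sub_mulVec, sub_eq_zero, Matrix.smul_mulVec, Matrix.one_mulVec] at this
  exact this.symm

lemma dotProduct_self_pos {x : N → ℝ} (hx : x ≠ 0) : 0 < x ⬝ᵥ x := by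
  have h1 : 0 ≤ x ⬝ᵥ x := Finset.sum_nonneg fun i _ => mul_self_nonneg _
  rcases h1.lt_or_eq with h | h
  · exact h
  · exfalso
    apply hx
    funext i
    have := (Finset.sum_eq_zero_iff_of_nonneg (fun i _ => mul_self_nonneg (x i))).mp h.symm
    have := this i (Finset.mem_univ i)
    have hxi : x i = 0 := by nlinarith
    simpa using hxi

lemma mem_spectrum_iff_eigvec {M : Matrix N N ℝ} {μ : ℝ} :
    μ ∈ spectrum ℝ M ↔ ∃ x : N → ℝ, x ≠ 0 ∧ M *ᵥ x = μ • x := by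
  rw [← AlgEquiv.spectrum_eq (toLinAlgEquiv <| Pi.basisFun ℝ N),
    ← Module.End.hasEigenvalue_iff_mem_spectrum]
  constructor
  · intro h
    obtain ⟨x, hx⟩ := h.exists_hasEigenvector
    refine ⟨x, hx.2, ?_⟩
    have := hx.apply_eq_smul
    simpa [Matrix.toLinAlgEquiv_apply, Matrix.toLin_eq_toLin', Matrix.toLin'_apply, ← Pi.single_smul, Finset.univ_sum_single, (funext fun i => by simp : ⇑((Pi.basisFun ℝ N).repr x) = x)] using this
  · rintro ⟨x, hx0, hx⟩
    apply Module.End.hasEigenvalue_of_hasEigenvector (x := x)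
    constructor
    · rw [Module.End.mem_eigenspace_iff]
      simpa [Matrix.toLinAlgEquiv_apply, Matrix.toLin_eq_toLin', Matrix.toLin'_apply, ← Pi.single_smul, Finset.univ_sum_single, (funext fun i => by simp : ⇑((Pi.basisFun ℝ N).repr x) = x)] using hx
    · exact hx0

lemma sSup_spectrum_eq {M : Matrix N N ℝ} (hM : M.IsHermitian) :
    sSup (spectrum ℝ M) = ⨆ i, hM.eigenvalues i := by
  obtain ⟨i0, hi0⟩ := Finite.exists_max hM.eigenvalues
  have hsup : (⨆ i, hM.eigenvalues i) = hM.eigenvalues i0 :=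
    le_antisymm (ciSup_le hi0) (le_ciSup (Set.Finite.bddAbove (Set.finite_range _)) i0)
  have hmem : (⨆ i, hM.eigenvalues i) ∈ spectrum ℝ M := by
    rw [hsup]; exact hM.eigenvalues_mem_spectrum_real i0
  have hub : ∀ μ ∈ spectrum ℝ M, μ ≤ ⨆ i, hM.eigenvalues i := by
    intro μ hμ
    obtain ⟨x, hx0, hx⟩ := mem_spectrum_iff_eigvec.mp hμ
    have h1 : x ⬝ᵥ (M *ᵥ x) ≤ (⨆ i, hM.eigenvalues i) * (x ⬝ᵥ x) :=
      rayleigh_le hM (fun i => hsup ▸ hi0 i) x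
    rw [hx, dotProduct_smul, smul_eq_mul] at h1
    exact le_of_mul_le_mul_right h1 (dotProduct_self_pos hx0)
  exact le_antisymm (csSup_le ⟨_, hmem⟩ hub) (le_csSup ⟨_, hub⟩ hmem)

lemma rayleigh_le_sSup {M : Matrix N N ℝ} (hM : M.IsHermitian) (x : N → ℝ) :
    x ⬝ᵥ (M *ᵥ x) ≤ sSup (spectrum ℝ M) * (x ⬝ᵥ x) := by
  rw [sSup_spectrum_eq hM]
  exact rayleigh_le hM (fun i => le_ciSup (Set.Finite.bddAbove (Set.finite_range _)) i) x

lemma sSup_spectrum_mem {M : Matrix N N ℝ} (hM : M.IsHermitian) :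
    sSup (spectrum ℝ M) ∈ spectrum ℝ M := by
  rw [sSup_spectrum_eq hM]
  obtain ⟨i0, hi0⟩ := Finite.exists_max hM.eigenvalues
  have hsup : (⨆ i, hM.eigenvalues i) = hM.eigenvalues i0 :=
    le_antisymm (ciSup_le hi0) (le_ciSup (Set.Finite.bddAbove (Set.finite_range _)) i0)
  rw [hsup]; exact hM.eigenvalues_mem_spectrum_real i0


variable {k n m : ℕ}

lemma adj_isHermitian (G : SimpleGraph (Fin k)) [DecidableRel G.Adj] :
    (G.adjMatrix ℝ).IsHermitian := by
  have := G.isSymm_adjMatrix (α := ℝ)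
  rw [Matrix.IsHermitian]
  rw [Matrix.IsSymm] at this
  rw [Matrix.conjTranspose, this]
  ext i j
  simp

lemma adj_nonneg (G : SimpleGraph (Fin k)) [DecidableRel G.Adj] (i j : Fin k) :
    0 ≤ G.adjMatrix ℝ i j := by
  simp [SimpleGraph.adjMatrix]
  split <;> norm_num

lemma zero_propagates {G : SimpleGraph (Fin k)} [DecidableRel G.Adj] {w : Fin k → ℝ}
    {Λ : ℝ} (hw : (G.adjMatrix ℝ) *ᵥ w = Λ • w) (hwpos : ∀ v, 0 ≤ w v)
    {a b : Fin k} (p : G.Walk a b) (ha : w a = 0) : w b = 0 := by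
  induction p with
  | nil => exact ha
  | @cons a b' c hadj p ih =>
    apply ih
    have h1 : ((G.adjMatrix ℝ) *ᵥ w) a = 0 := by
      rw [hw]; simp [ha]
    rw [Matrix.mulVec, dotProduct] at h1
    have hterm := (Finset.sum_eq_zero_iff_of_nonneg
      (fun j _ => mul_nonneg (adj_nonneg G a j) (hwpos j))).mp h1 b' (Finset.mem_univ b')
    have : G.adjMatrix ℝ a b' = 1 := by simp [hadj]
    rw [this, one_mul] at hterm
    exact hterm

lemma perron (hk : 2 ≤ k) (G : SimpleGraph (Fin k)) [DecidableRel G.Adj] (hG : G.Connected) :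
    ∃ w : Fin k → ℝ, (∀ v, 0 < w v) ∧
      (G.adjMatrix ℝ) *ᵥ w = (sSup (spectrum ℝ (G.adjMatrix ℝ))) • w ∧
      0 < sSup (spectrum ℝ (G.adjMatrix ℝ)) := by
  haveI : NeZero k := ⟨by omega⟩
  set M := G.adjMatrix ℝ with hMdef
  have hM : M.IsHermitian := adj_isHermitian G
  set Λ := sSup (spectrum ℝ M) with hΛ
  obtain ⟨v, hv0, hvEig⟩ := mem_spectrum_iff_eigvec.mp (sSup_spectrum_mem hM)
  set w : Fin k → ℝ := fun i => |v i| with hwdef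
  have hwnn : ∀ i, 0 ≤ w i := fun i => abs_nonneg _
  have hbd : ∀ i, hM.eigenvalues i ≤ Λ := fun i => by
    rw [hΛ, sSup_spectrum_eq hM]
    exact le_ciSup (Set.Finite.bddAbove (Set.finite_range _)) i
  have hww : w ⬝ᵥ w = v ⬝ᵥ v := by
    apply Finset.sum_congr rfl
    intro i _
    simp [hwdef, abs_mul_abs_self]
  have hwv : v ⬝ᵥ (M *ᵥ v) ≤ w ⬝ᵥ (M *ᵥ w) := by
    simp only [dotProduct, Matrix.mulVec, Finset.mul_sum]
    apply Finset.sum_le_sum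
    intro i _
    apply Finset.sum_le_sum
    intro j _
    have h1 : v i * v j ≤ w i * w j := by
      calc v i * v j ≤ |v i * v j| := le_abs_self _
        _ = w i * w j := abs_mul _ _
    nlinarith [adj_nonneg G i j, h1]
  have hEigVal : v ⬝ᵥ (M *ᵥ v) = Λ * (v ⬝ᵥ v) := by
    rw [hvEig, dotProduct_smul, smul_eq_mul]
  have hray : w ⬝ᵥ (M *ᵥ w) ≤ Λ * (w ⬝ᵥ w) := rayleigh_le_sSup hM w
  have heq : w ⬝ᵥ (M *ᵥ w) = Λ * (w ⬝ᵥ w) := by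
    rw [hww]; rw [hww] at hray; linarith
  have hEig : M *ᵥ w = Λ • w := eigvec_of_rayleigh_eq hM hbd w heq
  -- some coordinate of w is positive
  have hvex : ∃ u, v u ≠ 0 := by
    by_contra hcon
    push_neg at hcon
    exact hv0 (funext fun i => hcon i)
  obtain ⟨u, hu⟩ := hvex
  have hwu : 0 < w u := abs_pos.mpr hu
  -- w is everywhere positive
  have hwpos : ∀ a, 0 < w a := by
    intro a
    rcases (hwnn a).lt_or_eq with h | h
    · exact h
    · exfalso
      obtain ⟨p⟩ := hG.preconnected a u
      have := zero_propagates hEig hwnn p h.symm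
      exact hwu.ne' this
  -- Λ > 0
  have hΛnn : 0 ≤ Λ := by
    have h1 : Λ * w u = ((M *ᵥ w) u) := by rw [hEig]; simp
    have h2 : 0 ≤ (M *ᵥ w) u := by
      simp only [Matrix.mulVec, dotProduct]
      exact Finset.sum_nonneg fun j _ => mul_nonneg (adj_nonneg G u j) (hwnn j)
    nlinarith
  have hΛpos : 0 < Λ := by
    rcases hΛnn.lt_or_eq with h | h
    · exact h
    · exfalso
      haveI : Nontrivial (Fin k) := by
        apply Fin.nontrivial_iff_two_le.mpr hk
      obtain ⟨u', hne⟩ := exists_ne u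
      obtain ⟨p⟩ := hG.preconnected u u'
      cases p with
      | nil => exact hne rfl
      | @cons _ t _ hadj q =>
        have h1 : Λ * w t = ((M *ᵥ w) t) := by rw [hEig]; simp
        have h2 : G.adjMatrix ℝ t u * w u ≤ (M *ᵥ w) t := by
          simp only [Matrix.mulVec, dotProduct]
          apply Finset.single_le_sum (f := fun j => G.adjMatrix ℝ t j * w j)
            (fun j _ => mul_nonneg (adj_nonneg G t j) (hwnn j)) (Finset.mem_univ u)
        have h3 : G.adjMatrix ℝ t u = 1 := by simp [hadj.symm]
        rw [h3, one_mul] at h2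
        rw [← h] at h1
        simp at h1
        nlinarith
  exact ⟨w, hwpos, hEig, hΛpos⟩

lemma kron_left_mulVec (As : Matrix (Fin n) (Fin n) ℝ) (p : Fin n × Fin m → ℝ)
    (v : Fin n × Fin m) :
    ((As ⊗ₖ (1 : Matrix (Fin m) (Fin m) ℝ)) *ᵥ p) v = ∑ i', As v.1 i' * p (i', v.2) := by
  simp only [Matrix.mulVec, dotProduct, Fintype.sum_prod_type,
    Matrix.kroneckerMap_apply, Matrix.one_apply, mul_ite, mul_one, mul_zero, ite_mul, zero_mul]
  apply Finset.sum_congr rfl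
  intro i' _
  rw [Finset.sum_ite_eq Finset.univ v.2 (fun j' => As v.1 i' * p (i', j'))]
  simp

lemma kron_right_mulVec (Ab : Matrix (Fin m) (Fin m) ℝ) (p : Fin n × Fin m → ℝ)
    (v : Fin n × Fin m) :
    (((1 : Matrix (Fin n) (Fin n) ℝ) ⊗ₖ Ab) *ᵥ p) v = ∑ j', Ab v.2 j' * p (v.1, j') := by
  simp only [Matrix.mulVec, dotProduct, Fintype.sum_prod_type,
    Matrix.kroneckerMap_apply, Matrix.one_apply, ite_mul, one_mul, zero_mul]
  rw [Finset.sum_eq_single v.1]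
  · simp
  · intro b _ hb
    apply Finset.sum_eq_zero
    intro j' _
    simp [Ne.symm hb]
  · intro h
    exact absurd (Finset.mem_univ v.1) h


lemma quad_kron_left (As : Matrix (Fin n) (Fin n) ℝ) (p : Fin n × Fin m → ℝ) {Λ : ℝ}
    (hray : ∀ x : Fin n → ℝ, x ⬝ᵥ (As *ᵥ x) ≤ Λ * (x ⬝ᵥ x)) :
    p ⬝ᵥ ((As ⊗ₖ (1 : Matrix (Fin m) (Fin m) ℝ)) *ᵥ p) ≤ Λ * (p ⬝ᵥ p) := by
  have h1 : p ⬝ᵥ ((As ⊗ₖ (1 : Matrix (Fin m) (Fin m) ℝ)) *ᵥ p)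
      = ∑ j, (fun i => p (i, j)) ⬝ᵥ (As *ᵥ (fun i => p (i, j))) := by
    calc p ⬝ᵥ ((As ⊗ₖ (1 : Matrix (Fin m) (Fin m) ℝ)) *ᵥ p)
        = ∑ v : Fin n × Fin m, p v * ∑ i', As v.1 i' * p (i', v.2) :=
          Finset.sum_congr rfl (fun v _ => by rw [kron_left_mulVec])
      _ = ∑ i, ∑ j, p (i, j) * ∑ i', As i i' * p (i', j) := by rw [Fintype.sum_prod_type]
      _ = ∑ j, ∑ i, p (i, j) * ∑ i', As i i' * p (i', j) := Finset.sum_comm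
      _ = ∑ j, (fun i => p (i, j)) ⬝ᵥ (As *ᵥ (fun i => p (i, j))) := rfl
  have h2 : p ⬝ᵥ p = ∑ j, (fun i => p (i, j)) ⬝ᵥ (fun i => p (i, j)) := by
    calc p ⬝ᵥ p = ∑ i, ∑ j, p (i, j) * p (i, j) := by simp only [dotProduct]; rw [Fintype.sum_prod_type]
      _ = ∑ j, ∑ i, p (i, j) * p (i, j) := Finset.sum_comm
      _ = _ := rfl
  rw [h1, h2, Finset.mul_sum]
  exact Finset.sum_le_sum fun j _ => hray _

lemma quad_kron_right (Ab : Matrix (Fin m) (Fin m) ℝ) (p : Fin n × Fin m → ℝ) {Λ : ℝ}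
    (hray : ∀ x : Fin m → ℝ, x ⬝ᵥ (Ab *ᵥ x) ≤ Λ * (x ⬝ᵥ x)) :
    p ⬝ᵥ (((1 : Matrix (Fin n) (Fin n) ℝ) ⊗ₖ Ab) *ᵥ p) ≤ Λ * (p ⬝ᵥ p) := by
  have h1 : p ⬝ᵥ (((1 : Matrix (Fin n) (Fin n) ℝ) ⊗ₖ Ab) *ᵥ p)
      = ∑ i, (fun j => p (i, j)) ⬝ᵥ (Ab *ᵥ (fun j => p (i, j))) := by
    calc p ⬝ᵥ (((1 : Matrix (Fin n) (Fin n) ℝ) ⊗ₖ Ab) *ᵥ p)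
        = ∑ v : Fin n × Fin m, p v * ∑ j', Ab v.2 j' * p (v.1, j') :=
          Finset.sum_congr rfl (fun v _ => by rw [kron_right_mulVec])
      _ = ∑ i, ∑ j, p (i, j) * ∑ j', Ab j j' * p (i, j') := by rw [Fintype.sum_prod_type]
      _ = ∑ i, (fun j => p (i, j)) ⬝ᵥ (Ab *ᵥ (fun j => p (i, j))) := rfl
  have h2 : p ⬝ᵥ p = ∑ i, (fun j => p (i, j)) ⬝ᵥ (fun j => p (i, j)) := by
    calc p ⬝ᵥ p = ∑ i, ∑ j, p (i, j) * p (i, j) := by simp only [dotProduct]; rw [Fintype.sum_prod_type]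
      _ = _ := rfl
  rw [h1, h2, Finset.mul_sum]
  exact Finset.sum_le_sum fun i _ => hray _

lemma kronSum_mulVec_prod (As : Matrix (Fin n) (Fin n) ℝ) (Ab : Matrix (Fin m) (Fin m) ℝ)
    (ws : Fin n → ℝ) (wb : Fin m → ℝ) {Λs Λb : ℝ}
    (hs : As *ᵥ ws = Λs • ws) (hb : Ab *ᵥ wb = Λb • wb) :
    ((As ⊗ₖ (1 : Matrix (Fin m) (Fin m) ℝ)
      + (1 : Matrix (Fin n) (Fin n) ℝ) ⊗ₖ Ab) *ᵥ (fun v => ws v.1 * wb v.2))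
      = (Λs + Λb) • (fun v => ws v.1 * wb v.2) := by
  funext v
  rw [Matrix.add_mulVec, Pi.add_apply, kron_left_mulVec, kron_right_mulVec]
  have h1 : ∑ i', As v.1 i' * (ws i' * wb v.2) = (Λs * ws v.1) * wb v.2 := by
    have hs' : ∑ i', As v.1 i' * ws i' = Λs * ws v.1 := by
      have := congrFun hs v.1
      simpa [Matrix.mulVec, dotProduct] using this
    rw [← hs', Finset.sum_mul]
    exact Finset.sum_congr rfl fun i' _ => by ring
  have h2 : ∑ j', Ab v.2 j' * (ws v.1 * wb j') = ws v.1 * (Λb * wb v.2) := by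
    have hb' : ∑ j', Ab v.2 j' * wb j' = Λb * wb v.2 := by
      have := congrFun hb v.2
      simpa [Matrix.mulVec, dotProduct] using this
    rw [← hb', Finset.mul_sum]
    exact Finset.sum_congr rfl fun j' _ => by ring
  rw [h1, h2]
  simp only [Pi.smul_apply, smul_eq_mul]
  ring

omit [Fintype N] [DecidableEq N] [Nonempty N] in
lemma exists_equilibrium_dummy : True := trivial

lemma exists_equilibrium [Fintype N] [DecidableEq N] [Nonempty N]
    (A : Matrix N N ℝ) (hAnn : ∀ u v, 0 ≤ A u v)
    (w : N → ℝ) (hw : ∀ v, 0 < w v) {Λ c e : ℝ}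
    (hEig : A *ᵥ w = Λ • w) (hc : 0 < c) (he : 0 < e) (hce : e < c * Λ) :
    ∃ p : N → ℝ, (∀ v, p v ∈ Set.Ioo (0:ℝ) 1) ∧
      ∀ v, c * (A *ᵥ p) v * (1 - p v) = e * p v := by
  have hcΛ : 0 < c * Λ := lt_trans he hce
  have hΛpos : 0 < Λ := by
    rcases mul_pos_iff.mp hcΛ with ⟨_, h⟩ | ⟨h, _⟩
    · exact h
    · linarith
  obtain ⟨u0⟩ := ‹Nonempty N›
  set Wmax := Finset.univ.sup' ⟨u0, Finset.mem_univ u0⟩ w with hWdef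
  have hWpos : 0 < Wmax := lt_of_lt_of_le (hw u0) (Finset.le_sup' w (Finset.mem_univ u0))
  have hWle : ∀ v, w v ≤ Wmax := fun v => Finset.le_sup' w (Finset.mem_univ v)
  set ε := (c * Λ - e) / (c * Λ * Wmax) with hεdef
  have hεpos : 0 < ε := div_pos (by linarith) (mul_pos hcΛ hWpos)
  have hkey : ∀ v, c * Λ * (ε * w v) ≤ c * Λ - e := by
    intro v
    have h1 : ε * w v ≤ (c * Λ - e) / (c * Λ) := by
      rw [hεdef, div_mul_eq_mul_div, div_le_div_iff₀ (mul_pos hcΛ hWpos) hcΛ]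
      have := hWle v
      nlinarith [mul_le_mul_of_nonneg_left (hWle v)
        (mul_nonneg (sub_nonneg.mpr hce.le) hcΛ.le)]
    rw [← le_div_iff₀' hcΛ]
    exact h1
  have hmvnn : ∀ p : N → ℝ, (∀ v, 0 ≤ p v) → ∀ v, 0 ≤ (A *ᵥ p) v := by
    intro p hp v
    exact Finset.sum_nonneg fun u _ => mul_nonneg (hAnn v u) (hp u)
  have hmvmono : ∀ p q : N → ℝ, (∀ v, p v ≤ q v) → ∀ v, (A *ᵥ p) v ≤ (A *ᵥ q) v := by
    intro p q hpq v
    exact Finset.sum_le_sum fun u _ => mul_le_mul_of_nonneg_left (hpq u) (hAnn v u)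
  set F : (N → ℝ) → (N → ℝ) := fun p v => c * (A *ᵥ p) v / (c * (A *ᵥ p) v + e) with hFdef
  have hFmono : ∀ p q : N → ℝ, (∀ v, 0 ≤ p v) → (∀ v, p v ≤ q v) → ∀ v, F p v ≤ F q v := by
    intro p q hp hpq v
    have ht : 0 ≤ c * (A *ᵥ p) v := mul_nonneg hc.le (hmvnn p hp v)
    have hts : c * (A *ᵥ p) v ≤ c * (A *ᵥ q) v :=
      mul_le_mul_of_nonneg_left (hmvmono p q hpq v) hc.le
    rw [hFdef]
    simp only
    rw [div_le_div_iff₀ (by linarith) (by linarith)]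
    nlinarith
  have hFlt1 : ∀ p : N → ℝ, (∀ v, 0 ≤ p v) → ∀ v, F p v < 1 := by
    intro p hp v
    have ht : 0 ≤ c * (A *ᵥ p) v := mul_nonneg hc.le (hmvnn p hp v)
    rw [hFdef]
    simp only
    rw [div_lt_one (by linarith)]
    linarith
  set S : Set (N → ℝ) := {p | (∀ v, ε * w v ≤ p v ∧ p v ≤ 1) ∧ ∀ v, p v ≤ F p v} with hSdef
  set p0 : N → ℝ := fun v => ε * w v with hp0def
  have hp0pos : ∀ v, 0 < p0 v := fun v => mul_pos hεpos (hw v)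
  have hAp0 : ∀ v, (A *ᵥ p0) v = ε * (Λ * w v) := by
    intro v
    have h0 : p0 = ε • w := by funext v; simp [hp0def]
    rw [h0, Matrix.mulVec_smul, hEig]
    simp [mul_comm, mul_left_comm]
  have hεw1 : ∀ v, ε * w v < 1 := by
    intro v
    have := hkey v
    nlinarith [hw v, hεpos]
  have hp0S : p0 ∈ S := by
    refine ⟨fun v => ⟨le_refl _, (hεw1 v).le⟩, fun v => ?_⟩
    rw [hFdef]
    simp only [hp0def]
    rw [hAp0 v, le_div_iff₀ (by nlinarith [mul_pos hc (mul_pos hεpos (mul_pos hΛpos (hw v))), he])]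
    have h1 := hkey v
    nlinarith [mul_nonneg (mul_nonneg hεpos.le (hw v).le) he.le,
      mul_le_mul_of_nonneg_left h1 (mul_nonneg hεpos.le (hw v).le)]
  -- the supremum of S
  have hbdd : ∀ v, BddAbove ((fun p => p v) '' S) := by
    intro v
    exact ⟨1, by rintro _ ⟨p, hp, rfl⟩; exact (hp.1 v).2⟩
  have hSne : ∀ v : N, ((fun p => p v) '' S).Nonempty := fun v => ⟨p0 v, ⟨p0, hp0S, rfl⟩⟩
  set q : N → ℝ := fun v => sSup ((fun p => p v) '' S) with hqdef
  have hub : ∀ p ∈ S, ∀ v, p v ≤ q v := by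
    intro p hp v
    exact le_csSup (hbdd v) ⟨p, hp, rfl⟩
  have hqlow : ∀ v, ε * w v ≤ q v := fun v => hub p0 hp0S v
  have hq1 : ∀ v, q v ≤ 1 := by
    intro v
    apply csSup_le (hSne v)
    rintro _ ⟨p, hp, rfl⟩
    exact (hp.1 v).2
  have hqpos : ∀ v, 0 < q v := fun v => lt_of_lt_of_le (hp0pos v) (hqlow v)
  have hqF : ∀ v, q v ≤ F q v := by
    intro v
    apply csSup_le (hSne v)
    rintro _ ⟨p, hp, rfl⟩
    calc p v ≤ F p v := hp.2 v
      _ ≤ F q v := hFmono p q (fun u => le_trans (mul_pos hεpos (hw u)).le (hp.1 u).1)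
          (fun u => hub p hp u) v
  have hFqS : F q ∈ S := by
    refine ⟨fun v => ⟨le_trans (hqlow v) (hqF v), (hFlt1 q (fun u => (hqpos u).le) v).le⟩,
      fun v => hFmono q (F q) (fun u => (hqpos u).le) hqF v⟩
  have hfix : ∀ v, F q v = q v := fun v => le_antisymm (hub (F q) hFqS v) (hqF v)
  refine ⟨q, fun v => ⟨hqpos v, ?_⟩, fun v => ?_⟩
  · rw [← hfix v]
    exact hFlt1 q (fun u => (hqpos u).le) v
  · have h1 := hfix v
    rw [hFdef] at h1
    simp only at h1
    have hden : 0 < c * (A *ᵥ q) v + e := by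
      have := mul_nonneg hc.le (hmvnn q (fun u => (hqpos u).le) v)
      linarith
    rw [div_eq_iff hden.ne'] at h1
    nlinarith [h1]


end LevinsAux

/-- Levins-type metacommunity submodel: with `A = A_s ⊗ I_m + I_n ⊗ A_b` the adjacency
matrix of the product of a connected spatial network and a connected interaction
network, a nontrivial equilibrium `c (A p)_v (1 - p_v) = e p_v` with
`p ∈ (0,1)^{nm}` exists if and only if the metacommunity capacity `Λ_s + Λ_b`
exceeds `e/c`. -/
theorem levinsType_metacommunity_threshold {n m : ℕ} (hn : 2 ≤ n) (hm : 2 ≤ m)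
    (Gs : SimpleGraph (Fin n)) (Gb : SimpleGraph (Fin m))
    [DecidableRel Gs.Adj] [DecidableRel Gb.Adj]
    (hGs : Gs.Connected) (hGb : Gb.Connected)
    (A : Matrix (Fin n × Fin m) (Fin n × Fin m) ℝ)
    (hA : A = (Gs.adjMatrix ℝ) ⊗ₖ (1 : Matrix (Fin m) (Fin m) ℝ)
        + (1 : Matrix (Fin n) (Fin n) ℝ) ⊗ₖ (Gb.adjMatrix ℝ))
    (c e : ℝ) (hc : c ∈ Set.Ioo (0:ℝ) 1) (he : e ∈ Set.Ioo (0:ℝ) 1) :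
    (∃ p : (Fin n × Fin m) → ℝ, (∀ v, p v ∈ Set.Ioo (0:ℝ) 1) ∧
        ∀ v, c * (A.mulVec p) v * (1 - p v) = e * p v)
      ↔ e / c < sSup (spectrum ℝ (Gs.adjMatrix ℝ)) + sSup (spectrum ℝ (Gb.adjMatrix ℝ)) := by
  haveI : NeZero n := ⟨by omega⟩
  haveI : NeZero m := ⟨by omega⟩
  obtain ⟨hc0, hc1⟩ := hc
  obtain ⟨he0, he1⟩ := he
  set Λs := sSup (spectrum ℝ (Gs.adjMatrix ℝ)) with hΛs
  set Λb := sSup (spectrum ℝ (Gb.adjMatrix ℝ)) with hΛb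
  have hMs : (Gs.adjMatrix ℝ).IsHermitian := LevinsAux.adj_isHermitian Gs
  have hMb : (Gb.adjMatrix ℝ).IsHermitian := LevinsAux.adj_isHermitian Gb
  have hAnn : ∀ u v, 0 ≤ A u v := by
    intro u v
    rw [hA]
    apply add_nonneg
    · exact mul_nonneg (LevinsAux.adj_nonneg Gs u.1 v.1)
        (by rw [Matrix.one_apply]; split <;> norm_num)
    · exact mul_nonneg (by rw [Matrix.one_apply]; split <;> norm_num)
        (LevinsAux.adj_nonneg Gb u.2 v.2)
  constructor
  · rintro ⟨p, hp01, heqn⟩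
    have hppos : ∀ v, 0 < p v := fun v => (hp01 v).1
    have hp1 : ∀ v, p v < 1 := fun v => (hp01 v).2
    have hApnn : ∀ v, 0 ≤ (A *ᵥ p) v := fun v =>
      Finset.sum_nonneg fun u _ => mul_nonneg (hAnn v u) (hppos u).le
    have hterm : ∀ v, e * (p v * p v) < c * (p v * (A *ᵥ p) v) := by
      intro v
      have h1 := heqn v
      have hApos : 0 < (A *ᵥ p) v := by
        rcases (hApnn v).lt_or_eq with h | h
        · exact h
        · exfalso
          rw [← h] at h1
          simp at h1
          rcases h1 with h1 | h1
          · exact he0.ne' h1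
          · exact (hppos v).ne' h1
      have h2 : e * p v < c * (A *ᵥ p) v := by
        nlinarith [mul_pos (mul_pos hc0 hApos) (hppos v)]
      nlinarith [mul_lt_mul_of_pos_left h2 (hppos v)]
    have hsum : e * (p ⬝ᵥ p) < c * (p ⬝ᵥ (A *ᵥ p)) := by
      rw [dotProduct, dotProduct, Finset.mul_sum, Finset.mul_sum]
      exact Finset.sum_lt_sum_of_nonempty Finset.univ_nonempty fun v _ => hterm v
    have hquad : p ⬝ᵥ (A *ᵥ p) ≤ (Λs + Λb) * (p ⬝ᵥ p) := by
      rw [hA, Matrix.add_mulVec, dotProduct_add, add_mul]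
      apply add_le_add
      · exact LevinsAux.quad_kron_left _ p (LevinsAux.rayleigh_le_sSup hMs)
      · exact LevinsAux.quad_kron_right _ p (LevinsAux.rayleigh_le_sSup hMb)
    have hP : 0 < p ⬝ᵥ p := LevinsAux.dotProduct_self_pos (by
      intro h0
      have := hppos (Classical.arbitrary _)
      rw [h0] at this
      simp at this)
    rw [div_lt_iff₀ hc0]
    nlinarith [hsum, hquad, hP]
  · intro hgap
    obtain ⟨ws, hwspos, hwsEig, hΛspos⟩ := LevinsAux.perron hn Gs hGs
    obtain ⟨wb, hwbpos, hwbEig, hΛbpos⟩ := LevinsAux.perron hm Gb hGb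
    have hEig : A *ᵥ (fun v => ws v.1 * wb v.2) = (Λs + Λb) • (fun v => ws v.1 * wb v.2) := by
      rw [hA]
      exact LevinsAux.kronSum_mulVec_prod _ _ ws wb hwsEig hwbEig
    have hce : e < c * (Λs + Λb) := by
      rw [div_lt_iff₀ hc0] at hgap
      linarith [hgap]
    exact LevinsAux.exists_equilibrium A hAnn _ (fun v => mul_pos (hwspos v.1) (hwbpos v.2))
      hEig hc0 he0 hce
end
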